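/- arXiv:1704.05218 — 13 statements merged into one kernel-verified Lean document; each statement's English description precedes it below -/
import Mathlib

section
/- Every eigenvalue z of an n×n complex matrix A (n ≥ 2) lies in the union over pairs i ≠ j of the Brauer ovals {z ∈ ℂ : |z - a_{ii}| · |z - a_{jj}| ≤ (Σ_{k≠i} |a_{ki}|)(Σ_{k≠j} |a_{kj}|)}, where the radii use column sums. -/
open Finset Matrix

/-- Brauer's ovals of Cassini (column version): every eigenvalue `z` of an `n × n`
complex matrix `A` (`n ≥ 2`) satisfies
`|z - a_ii| * |z - a_jj| ≤ (∑_{k≠i} |a_ki|) * (∑_{k≠j} |a_kj|)` for some pair `i ≠ j`. -/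
theorem brauer_ovals_column {n : ℕ} (hn : 2 ≤ n) (A : Matrix (Fin n) (Fin n) ℂ)
    (z : ℂ) (hz : z ∈ spectrum ℂ A) :
    ∃ i j : Fin n, i ≠ j ∧
      ‖z - A i i‖ * ‖z - A j j‖ ≤
        (∑ k ∈ univ.erase i, ‖A k i‖) *
          (∑ k ∈ univ.erase j, ‖A k j‖) := by
  -- z is also a spectral value of Aᵀ, since determinants agree under transpose
  have hdet : (z • (1 : Matrix (Fin n) (Fin n) ℂ) - Aᵀ).det = 0 := by
    rw [spectrum.mem_iff] at hz
    have h1 : (z • (1 : Matrix (Fin n) (Fin n) ℂ) - Aᵀ) =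
        (z • (1 : Matrix (Fin n) (Fin n) ℂ) - A)ᵀ := by
      rw [Matrix.transpose_sub, Matrix.transpose_smul, Matrix.transpose_one]
    rw [h1, Matrix.det_transpose]
    by_contra h
    exact hz (by
      have : IsUnit (z • (1 : Matrix (Fin n) (Fin n) ℂ) - A) :=
        (Matrix.isUnit_iff_isUnit_det _).2 (isUnit_iff_ne_zero.2 h)
      simpa [Algebra.algebraMap_eq_smul_one] using this)
  obtain ⟨v, hv0, hv⟩ := (Matrix.exists_mulVec_eq_zero_iff).2 hdet
  -- eigen-equation: ∑ k, A k i * v k = z * v i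
  have heig : ∀ i : Fin n, ∑ k, A k i * v k = z * v i := by
    intro i
    have := congrFun hv i
    simp only [Matrix.mulVec, dotProduct, Matrix.sub_apply, Matrix.smul_apply,
      Matrix.one_apply, Pi.zero_apply, Matrix.transpose_apply, sub_mul, smul_eq_mul] at this
    rw [Finset.sum_sub_distrib] at this
    have h2 : ∑ k, (z * if i = k then (1:ℂ) else 0) * v k = z * v i := by
      simp [mul_ite, ite_mul]
    rw [h2] at this
    linear_combination -this
  -- pick i with maximal |v i|
  obtain ⟨i, -, hi⟩ := Finset.exists_max_image (univ : Finset (Fin n))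
    (fun k => ‖v k‖) ⟨⟨0, by omega⟩, mem_univ _⟩
  have hvi : 0 < ‖v i‖ := by
    obtain ⟨k, hk⟩ := Function.ne_iff.mp hv0
    have : 0 < ‖v k‖ := by simpa using hk
    exact lt_of_lt_of_le this (hi k (mem_univ k))
  -- pick j with maximal |v j| among k ≠ i
  have hne : (univ.erase i).Nonempty := by
    rw [← Finset.card_pos, Finset.card_erase_of_mem (mem_univ i), Finset.card_univ,
      Fintype.card_fin]
    omega
  obtain ⟨j, hjmem, hj⟩ := Finset.exists_max_image (univ.erase i)
    (fun k => ‖v k‖) hne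
  have hij : i ≠ j := (Finset.ne_of_mem_erase hjmem).symm
  -- key bound
  have key : ∀ (p : Fin n) (b : ℝ), (∀ k, k ≠ p → ‖v k‖ ≤ b) →
      ‖z - A p p‖ * ‖v p‖ ≤
        (∑ k ∈ univ.erase p, ‖A k p‖) * b := by
    intro p b hk
    have hsplit : (z - A p p) * v p = ∑ k ∈ univ.erase p, A k p * v k := by
      have h := heig p
      rw [← Finset.add_sum_erase _ _ (mem_univ p)] at h
      linear_combination -h
    calc ‖z - A p p‖ * ‖v p‖
        = ‖(z - A p p) * v p‖ := (norm_mul _ _).symm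
      _ = ‖∑ k ∈ univ.erase p, A k p * v k‖ := by rw [hsplit]
      _ ≤ ∑ k ∈ univ.erase p, ‖A k p * v k‖ :=
          norm_sum_le _ _
      _ ≤ ∑ k ∈ univ.erase p, ‖A k p‖ * b := by
          refine Finset.sum_le_sum fun k hk' => ?_
          rw [norm_mul]
          exact mul_le_mul_of_nonneg_left (hk k (Finset.ne_of_mem_erase hk'))
            (norm_nonneg _)
      _ = (∑ k ∈ univ.erase p, ‖A k p‖) * b := (Finset.sum_mul _ _ _).symm
  refine ⟨i, j, hij, ?_⟩
  have h1 : ‖z - A i i‖ * ‖v i‖ ≤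
      (∑ k ∈ univ.erase i, ‖A k i‖) * ‖v j‖ :=
    key i _ fun k hk => hj k (Finset.mem_erase.mpr ⟨hk, mem_univ k⟩)
  have h2 : ‖z - A j j‖ * ‖v j‖ ≤
      (∑ k ∈ univ.erase j, ‖A k j‖) * ‖v i‖ :=
    key j _ fun k _ => hi k (mem_univ k)
  have hRi : 0 ≤ ∑ k ∈ univ.erase i, ‖A k i‖ :=
    Finset.sum_nonneg fun k _ => norm_nonneg _
  have hRj : 0 ≤ ∑ k ∈ univ.erase j, ‖A k j‖ :=
    Finset.sum_nonneg fun k _ => norm_nonneg _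
  rcases eq_or_lt_of_le (norm_nonneg (v j)) with hvj | hvj
  · -- v j = 0, so RHS of h1 is 0 and |z - A i i| = 0
    have : ‖z - A i i‖ * ‖v i‖ ≤ 0 := by
      rw [← hvj] at h1; simpa using h1
    have hz0 : ‖z - A i i‖ = 0 :=
      le_antisymm (nonpos_of_mul_nonpos_right (by nlinarith [norm_nonneg (z - A i i)]) hvi) (norm_nonneg _)
    rw [hz0, zero_mul]
    exact mul_nonneg hRi hRj
  · have hmul := mul_le_mul h1 h2
      (mul_nonneg (norm_nonneg _) (norm_nonneg _))
      (mul_nonneg hRi (le_of_lt hvj))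
    nlinarith [norm_nonneg (z - A i i),
      norm_nonneg (z - A j j)]
end

section
/- If A is a strictly diagonally dominant matrix with positive diagonal entries and nonpositive off-diagonal entries, then for each i, the diagonal entry α_{ii} of A^{-1} satisfies α_{ii} ≥ 1/(a_{ii} - Σ_{k≠i} a_{ik} a_{ki} / a_{kk}). -/
open Finset

/-- If `A` is a strictly diagonally dominant nonsingular `M`-matrix, then each diagonal entry
of `A⁻¹` satisfies `α_ii ≥ 1 / (a_ii - ∑_{k≠i} a_ik a_ki / a_kk)`. -/
theorem inv_diag_lower_bound {n : ℕ} (A : Matrix (Fin n) (Fin n) ℝ)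
    (hA : IsUnit A.det)
    (hoff : ∀ i j, i ≠ j → A i j ≤ 0)
    (hinv : ∀ i j, 0 ≤ A⁻¹ i j)
    (hsdd : ∀ i, ∑ j ∈ univ.erase i, |A i j| < A i i) :
    ∀ i, 1 / (A i i - ∑ k ∈ univ.erase i, A i k * A k i / A k k) ≤ A⁻¹ i i := by
  intro i
  have hdpos : ∀ k, 0 < A k k := fun k =>
    lt_of_le_of_lt (Finset.sum_nonneg fun j _ => abs_nonneg _) (hsdd k)
  have hmul := Matrix.mul_nonsing_inv A hA
  have heq : ∀ k, ∑ j, A k j * A⁻¹ j i = if k = i then 1 else 0 := by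
    intro k
    have := congrFun (congrFun hmul k) i
    simpa [Matrix.mul_apply, Matrix.one_apply] using this
  -- positivity of the denominator
  have hsumle : ∑ k ∈ univ.erase i, A i k * A k i / A k k ≤ ∑ k ∈ univ.erase i, |A i k| := by
    apply Finset.sum_le_sum
    intro k hk
    have hk' : k ≠ i := Finset.ne_of_mem_erase hk
    have h1 : A i k ≤ 0 := hoff i k (Ne.symm hk')
    have h2 : A k i ≤ 0 := hoff k i hk'
    have habs : A i k * A k i = |A i k| * |A k i| := by
      rw [abs_of_nonpos h1, abs_of_nonpos h2]; ring
    rw [habs, mul_div_assoc]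
    have hki : |A k i| ≤ A k k := by
      calc |A k i| ≤ ∑ j ∈ univ.erase k, |A k j| :=
            Finset.single_le_sum (f := fun j => |A k j|) (fun j _ => abs_nonneg _)
              (Finset.mem_erase.mpr ⟨Ne.symm hk', Finset.mem_univ _⟩)
        _ ≤ A k k := (hsdd k).le
    calc |A i k| * (|A k i| / A k k) ≤ |A i k| * 1 :=
          mul_le_mul_of_nonneg_left ((div_le_one (hdpos k)).mpr hki) (abs_nonneg _)
      _ = |A i k| := mul_one _
  have hDpos : 0 < A i i - ∑ k ∈ univ.erase i, A i k * A k i / A k k := by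
    have := hsdd i; linarith
  -- key bound on off-diagonal entries of the inverse column i
  have hkey : ∀ k ∈ univ.erase i,
      A i k * A⁻¹ k i ≤ -(A i k * A k i / A k k) * A⁻¹ i i := by
    intro k hk
    have hk' : k ≠ i := Finset.ne_of_mem_erase hk
    have h1 : A i k ≤ 0 := hoff i k (Ne.symm hk')
    have h2 : A k i ≤ 0 := hoff k i hk'
    have hrow := heq k
    rw [if_neg hk'] at hrow
    have hsplit : A k k * A⁻¹ k i + ∑ j ∈ univ.erase k, A k j * A⁻¹ j i = 0 := by
      rw [← hrow]
      exact Finset.add_sum_erase univ (fun j => A k j * A⁻¹ j i) (Finset.mem_univ k)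
    have hge : (-A k i) * A⁻¹ i i ≤ A k k * A⁻¹ k i := by
      have : (-A k i) * A⁻¹ i i ≤ ∑ j ∈ univ.erase k, (-A k j) * A⁻¹ j i := by
        apply Finset.single_le_sum (f := fun j => (-A k j) * A⁻¹ j i)
        · intro j hj
          exact mul_nonneg (neg_nonneg.mpr (hoff k j (Ne.symm (Finset.ne_of_mem_erase hj))))
            (hinv j i)
        · exact Finset.mem_erase.mpr ⟨Ne.symm hk', Finset.mem_univ _⟩
      have h3 : ∑ j ∈ univ.erase k, (-A k j) * A⁻¹ j i = A k k * A⁻¹ k i := by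
        have : ∑ j ∈ univ.erase k, (-A k j) * A⁻¹ j i
            = -∑ j ∈ univ.erase k, A k j * A⁻¹ j i := by
          rw [← Finset.sum_neg_distrib]; apply Finset.sum_congr rfl; intro j _; ring
        rw [this]; linarith
      linarith
    -- divide by A k k
    have hBk : (-A k i) * A⁻¹ i i / A k k ≤ A⁻¹ k i := by
      rw [div_le_iff₀ (hdpos k)]; nlinarith [hdpos k]
    have := mul_le_mul_of_nonpos_left hBk h1
    calc A i k * A⁻¹ k i ≤ A i k * ((-A k i) * A⁻¹ i i / A k k) := this
      _ = -(A i k * A k i / A k k) * A⁻¹ i i := by ring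
  -- main inequality
  have hrowi := heq i
  rw [if_pos rfl] at hrowi
  have hspliti : A i i * A⁻¹ i i + ∑ k ∈ univ.erase i, A i k * A⁻¹ k i = 1 := by
    rw [← hrowi]
    exact Finset.add_sum_erase univ (fun k => A i k * A⁻¹ k i) (Finset.mem_univ i)
  have hsum2 : ∑ k ∈ univ.erase i, A i k * A⁻¹ k i
      ≤ -(∑ k ∈ univ.erase i, A i k * A k i / A k k) * A⁻¹ i i := by
    calc ∑ k ∈ univ.erase i, A i k * A⁻¹ k i
        ≤ ∑ k ∈ univ.erase i, -(A i k * A k i / A k k) * A⁻¹ i i :=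
          Finset.sum_le_sum hkey
      _ = -(∑ k ∈ univ.erase i, A i k * A k i / A k k) * A⁻¹ i i := by
          rw [← Finset.sum_mul, ← Finset.sum_neg_distrib]
  rw [div_le_iff₀ hDpos]
  nlinarith [hspliti, hsum2]
end

section
/- If A is a strictly diagonally dominant M-matrix, then for each i, the diagonal entries of the inverse satisfy 1/a_{ii} ≤ α_{ii} ≤ 1/(a_{ii} - Σ_{k≠i} |a_{ik}| d_k), where d_k = Σ_{j≠k} |a_{kj}| / a_{kk}. -/
open Finset

/-- If `A` is a strictly diagonally dominant nonsingular `M`-matrix, then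
`1/a_ii ≤ α_ii ≤ 1/(a_ii - ∑_{k≠i} |a_ik| d_k)` where `d_k = (∑_{j≠k} |a_kj|)/a_kk`. -/
theorem inv_diag_two_sided_bound {n : ℕ} (A : Matrix (Fin n) (Fin n) ℝ)
    (hA : IsUnit A.det)
    (hoff : ∀ i j, i ≠ j → A i j ≤ 0)
    (hinv : ∀ i j, 0 ≤ A⁻¹ i j)
    (hsdd : ∀ i, ∑ j ∈ univ.erase i, |A i j| < A i i) :
    ∀ i, 1 / A i i ≤ A⁻¹ i i ∧
      A⁻¹ i i ≤ 1 / (A i i - ∑ k ∈ univ.erase i,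
        |A i k| * ((∑ j ∈ univ.erase k, |A k j|) / A k k)) := by
  intro i
  set B := A⁻¹ with hBdef
  have hdiag : ∀ j, 0 < A j j := fun j =>
    lt_of_le_of_lt (Finset.sum_nonneg fun k _ => abs_nonneg _) (hsdd j)
  have hAB : A * B = 1 := Matrix.mul_nonsing_inv A hA
  have hrow : ∀ j, A j j * B j i + ∑ k ∈ univ.erase j, A j k * B k i
      = (1 : Matrix (Fin n) (Fin n) ℝ) j i := by
    intro j
    rw [← hAB, Matrix.mul_apply,
      Finset.add_sum_erase univ (fun k => A j k * B k i) (mem_univ j)]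
  -- absolute values on off-diagonal entries
  have habs : ∀ j k, k ≠ j → A j k * B k i = -(|A j k| * B k i) := by
    intro j k hk
    rw [abs_of_nonpos (hoff j k (Ne.symm hk))]
    ring
  have hrow' : ∀ j, A j j * B j i - ∑ k ∈ univ.erase j, |A j k| * B k i
      = (1 : Matrix (Fin n) (Fin n) ℝ) j i := by
    intro j
    rw [← hrow j]
    rw [Finset.sum_congr rfl (fun k hk => habs j k (Finset.mem_erase.1 hk).1),
      Finset.sum_neg_distrib]
    ring
  have hkey : A i i * B i i = 1 + ∑ k ∈ univ.erase i, |A i k| * B k i := by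
    have := hrow' i
    rw [Matrix.one_apply_eq] at this
    linarith
  have hsum_nonneg : 0 ≤ ∑ k ∈ univ.erase i, |A i k| * B k i :=
    Finset.sum_nonneg fun k _ => mul_nonneg (abs_nonneg _) (hinv k i)
  have hlow : 1 ≤ A i i * B i i := by linarith
  have hBii_pos : 0 < B i i := by
    rcases lt_or_ge 0 (B i i) with h | h
    · exact h
    · nlinarith [hdiag i]
  -- The diagonal entry dominates the column
  have hmax : ∀ k, B k i ≤ B i i := by
    obtain ⟨j, -, hj⟩ := Finset.exists_max_image univ (fun k => B k i) ⟨i, mem_univ i⟩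
    have hji : B j i ≤ B i i := by
      by_cases h : j = i
      · subst h; exact le_refl _
      · exfalso
        have h0 : 0 < B j i := lt_of_lt_of_le hBii_pos (hj i (mem_univ i))
        have heq : A j j * B j i - ∑ k ∈ univ.erase j, |A j k| * B k i = 0 := by
          rw [hrow' j, Matrix.one_apply_ne h]
        have hle : ∑ k ∈ univ.erase j, |A j k| * B k i
            ≤ (∑ k ∈ univ.erase j, |A j k|) * B j i := by
          rw [Finset.sum_mul]
          exact Finset.sum_le_sum fun k _ =>
            mul_le_mul_of_nonneg_left (hj k (mem_univ k)) (abs_nonneg _)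
        nlinarith [hsdd j]
    exact fun k => le_trans (hj k (mem_univ k)) hji
  -- off-diagonal entries bounded by d_j * B i i
  have hd : ∀ j, j ≠ i →
      B j i ≤ ((∑ k ∈ univ.erase j, |A j k|) / A j j) * B i i := by
    intro j hji
    have heq : A j j * B j i - ∑ k ∈ univ.erase j, |A j k| * B k i = 0 := by
      rw [hrow' j, Matrix.one_apply_ne hji]
    have hle : ∑ k ∈ univ.erase j, |A j k| * B k i
        ≤ (∑ k ∈ univ.erase j, |A j k|) * B i i := by
      rw [Finset.sum_mul]
      exact Finset.sum_le_sum fun k _ =>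
        mul_le_mul_of_nonneg_left (hmax k) (abs_nonneg _)
    rw [div_mul_eq_mul_div, le_div_iff₀ (hdiag j)]
    nlinarith
  set S := ∑ k ∈ univ.erase i, |A i k| * ((∑ j ∈ univ.erase k, |A k j|) / A k k)
    with hSdef
  have hS_lt : S < A i i := by
    have : S ≤ ∑ k ∈ univ.erase i, |A i k| := by
      apply Finset.sum_le_sum
      intro k _
      have hdk : (∑ j ∈ univ.erase k, |A k j|) / A k k ≤ 1 :=
        le_of_lt ((div_lt_one (hdiag k)).2 (hsdd k))
      calc |A i k| * ((∑ j ∈ univ.erase k, |A k j|) / A k k)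
          ≤ |A i k| * 1 := mul_le_mul_of_nonneg_left hdk (abs_nonneg _)
        _ = |A i k| := mul_one _
    linarith [hsdd i]
  have hmain : (A i i - S) * B i i ≤ 1 := by
    have hstep : ∑ k ∈ univ.erase i, |A i k| * B k i ≤ S * B i i := by
      rw [hSdef, Finset.sum_mul]
      apply Finset.sum_le_sum
      intro k hk
      have hki : k ≠ i := (Finset.mem_erase.1 hk).1
      calc |A i k| * B k i
          ≤ |A i k| * (((∑ j ∈ univ.erase k, |A k j|) / A k k) * B i i) :=
            mul_le_mul_of_nonneg_left (hd k hki) (abs_nonneg _)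
        _ = |A i k| * ((∑ j ∈ univ.erase k, |A k j|) / A k k) * B i i := by ring
    nlinarith
  constructor
  · rw [div_le_iff₀ (hdiag i)]
    linarith [mul_comm (A i i) (B i i)]
  · rw [le_div_iff₀ (by linarith : (0:ℝ) < A i i - S)]
    nlinarith
end

section
/- If A is a strictly diagonally dominant M-matrix, then for all j ≠ i, the quantity m_{ji} = (|a_{ji}| + Σ_{k≠j,i} |a_{jk}| r_i) / |a_{jj}| satisfies m_{ji} ≤ r_i, where r_i = max_{j≠i} |a_{ji}| / (|a_{jj}| - Σ_{k≠j,i} |a_{jk}|). -/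
open Finset

/-- If `A` is a strictly diagonally dominant nonsingular `M`-matrix, then for all `j ≠ i`,
`m_ji = (|a_ji| + ∑_{k≠j,i} |a_jk| r_i) / a_jj ≤ r_i`, where
`r_i = max_{j≠i} |a_ji| / (a_jj - ∑_{k≠j,i} |a_jk|)`. -/
theorem m_ji_le_r_i {n : ℕ} (hn : 2 ≤ n) (A : Matrix (Fin n) (Fin n) ℝ)
    (hA : IsUnit A.det)
    (hoff : ∀ i j, i ≠ j → A i j ≤ 0)
    (hinv : ∀ i j, 0 ≤ A⁻¹ i j)
    (hsdd : ∀ i, ∑ j ∈ univ.erase i, |A i j| < A i i)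
    (hne : ∀ i : Fin n, (univ.erase i).Nonempty)
    (r : Fin n → ℝ)
    (hr : ∀ i, r i = (univ.erase i).sup' (hne i)
        (fun j => |A j i| / (|A j j| - ∑ k ∈ (univ.erase j).erase i, |A j k|))) :
    ∀ i j : Fin n, j ≠ i →
      (|A j i| + (∑ k ∈ (univ.erase j).erase i, |A j k|) * r i) / |A j j| ≤ r i := by
  intro i j hji
  set s := ∑ k ∈ (univ.erase j).erase i, |A j k| with hs
  have hs0 : 0 ≤ s := Finset.sum_nonneg fun k _ => abs_nonneg _
  have hsum : |A j i| + s = ∑ k ∈ univ.erase j, |A j k| := by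
    exact Finset.add_sum_erase (univ.erase j) (fun k => |A j k|) (Finset.mem_erase.mpr ⟨hji.symm, Finset.mem_univ i⟩)
  have hjj : |A j i| + s < A j j := hsum ▸ hsdd j
  have hAjj : 0 < A j j := lt_of_le_of_lt (by positivity) hjj
  have habs : |A j j| = A j j := abs_of_pos hAjj
  have hpos : 0 < |A j j| - s := by rw [habs]; nlinarith [abs_nonneg (A j i)]
  have hri : |A j i| / (|A j j| - s) ≤ r i := by
    rw [hr i]
    exact Finset.le_sup' (fun j => |A j i| / (|A j j| - ∑ k ∈ (univ.erase j).erase i, |A j k|)) (Finset.mem_erase.mpr ⟨hji, Finset.mem_univ j⟩)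
  rw [div_le_iff₀ hpos] at hri
  rw [div_le_iff₀ (by rw [habs]; exact hAjj)]
  nlinarith [hri]
end

section
/- Let A be a nonsingular M-matrix with inverse A^{-1} = [α_{ij}], let B = [b_{ij}] ≥ 0, and suppose nonnegative numbers p_{ki} with 0 ≤ p_{ki} < 1 satisfy α_{ki} ≤ p_{ki} α_{ii} for all k ≠ i. Then ρ(B∘A^{-1}) ≤ max_{i≠j} (1/2){ b_{ii}α_{ii} + b_{jj}α_{jj} + [ (b_{ii}α_{ii} - b_{jj}α_{jj})² + 4 α_{ii}α_{jj} (Σ_{k≠i} b_{ki} p_{ki})(Σ_{k≠j} b_{kj} p_{kj}) ]^{1/2} }. -/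
open Finset

/-- The spectral radius of a real matrix: the supremum of the moduli of its complex
eigenvalues. -/
noncomputable def specRad {n : ℕ} (M : Matrix (Fin n) (Fin n) ℝ) : ℝ :=
  sSup ((fun z : ℂ => ‖z‖) '' spectrum ℂ (M.map Complex.ofReal))

lemma eigvec_aux {n : ℕ} (N : Matrix (Fin n) (Fin n) ℂ) {μ : ℂ} (hμ : μ ∈ spectrum ℂ N) :
    ∃ v : Fin n → ℂ, v ≠ 0 ∧ ∀ i, ∑ k, v k * N k i = μ * v i := by
  rw [spectrum.mem_iff, Matrix.isUnit_iff_isUnit_det, isUnit_iff_ne_zero, not_not] at hμ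
  obtain ⟨v, hv0, hv⟩ := Matrix.exists_vecMul_eq_zero_iff.mpr hμ
  refine ⟨v, hv0, fun i => ?_⟩
  have := congrFun hv i
  simp only [Matrix.vecMul, dotProduct, Matrix.sub_apply,
    Matrix.algebraMap_matrix_apply, Algebra.algebraMap_self, RingHom.id_apply,
    Pi.zero_apply, mul_sub, mul_ite, mul_zero,
    Finset.sum_sub_distrib, Finset.sum_ite_eq', Finset.mem_univ, if_true] at this
  linear_combination -this + (mul_comm (v i) μ)

lemma keyq_aux (r a b T : ℝ) (hT : 0 ≤ T)
    (h : a < r → b < r → (r - a) * (r - b) ≤ T) :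
    r ≤ (1 / 2) * (a + b + Real.sqrt ((a - b) ^ 2 + 4 * T)) := by
  have hD : |a - b| ≤ Real.sqrt ((a - b) ^ 2 + 4 * T) := by
    rw [← Real.sqrt_sq_eq_abs]
    exact Real.sqrt_le_sqrt (by linarith)
  rcases le_or_gt r a with hra | hra
  · have := le_abs_self (a - b); linarith
  rcases le_or_gt r b with hrb | hrb
  · have := neg_abs_le (a - b); linarith
  have h2 : (r - a) * (r - b) ≤ T := h hra hrb
  have h3 : 2 * r - a - b ≤ Real.sqrt ((a - b) ^ 2 + 4 * T) := by
    rw [Real.le_sqrt (by linarith) (by nlinarith)]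
    nlinarith
  linarith

/-- Brauer-type bound for `ρ(B ∘ A⁻¹)` for an M-matrix `A` and a nonnegative matrix `B`,
given constants `p_ki` with `α_ki ≤ p_ki α_ii` for `k ≠ i`. -/
theorem specRad_hadamard_inv_le {n : ℕ} (hn : 2 ≤ n)
    (A B : Matrix (Fin n) (Fin n) ℝ)
    (hA : IsUnit A.det)
    (hoff : ∀ i j, i ≠ j → A i j ≤ 0)
    (hinv : ∀ i j, 0 ≤ A⁻¹ i j)
    (hB : ∀ i j, 0 ≤ B i j)
    (p : Fin n → Fin n → ℝ)
    (hp0 : ∀ k i, k ≠ i → 0 ≤ p k i) (hp1 : ∀ k i, k ≠ i → p k i < 1)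
    (hpa : ∀ k i, k ≠ i → A⁻¹ k i ≤ p k i * A⁻¹ i i)
    (hne : (univ.offDiag : Finset (Fin n × Fin n)).Nonempty) :
    specRad (Matrix.hadamard B A⁻¹) ≤
      univ.offDiag.sup' hne (fun q =>
        (1 / 2) * (B q.1 q.1 * A⁻¹ q.1 q.1 + B q.2 q.2 * A⁻¹ q.2 q.2 +
          Real.sqrt ((B q.1 q.1 * A⁻¹ q.1 q.1 - B q.2 q.2 * A⁻¹ q.2 q.2) ^ 2 +
            4 * A⁻¹ q.1 q.1 * A⁻¹ q.2 q.2 *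
              (∑ k ∈ univ.erase q.1, B k q.1 * p k q.1) *
              (∑ k ∈ univ.erase q.2, B k q.2 * p k q.2)))) := by
  classical
  set M := Matrix.hadamard B A⁻¹ with hMdef
  have hMapp : ∀ k i, M k i = B k i * A⁻¹ k i := fun k i => rfl
  have hMnn : ∀ k i, 0 ≤ M k i := fun k i => mul_nonneg (hB k i) (hinv k i)
  have hSnn : ∀ t, 0 ≤ ∑ k ∈ univ.erase t, B k t * p k t := fun t =>
    Finset.sum_nonneg fun k hk => mul_nonneg (hB k t) (hp0 k t (Finset.mem_erase.mp hk).1)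
  have hCnn : ∀ t, 0 ≤ ∑ k ∈ univ.erase t, M k t := fun t =>
    Finset.sum_nonneg fun k _ => hMnn k t
  have hCS : ∀ t, ∑ k ∈ univ.erase t, M k t ≤
      A⁻¹ t t * ∑ k ∈ univ.erase t, B k t * p k t := by
    intro t
    rw [Finset.mul_sum]
    refine Finset.sum_le_sum fun k hk => ?_
    have hk' : k ≠ t := (Finset.mem_erase.mp hk).1
    calc M k t = B k t * A⁻¹ k t := rfl
      _ ≤ B k t * (p k t * A⁻¹ t t) :=
          mul_le_mul_of_nonneg_left (hpa k t hk') (hB k t)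
      _ = A⁻¹ t t * (B k t * p k t) := by ring
  refine Real.sSup_le ?_ ?_
  · rintro x ⟨μ, hμ, rfl⟩
    have hN : Nonempty (Fin n) := ⟨⟨0, by omega⟩⟩
    obtain ⟨v, hv0, hv⟩ := eigvec_aux _ hμ
    obtain ⟨i, -, hi⟩ := Finset.exists_max_image univ (fun k => ‖v k‖)
      Finset.univ_nonempty
    have hvi : 0 < ‖v i‖ := by
      obtain ⟨k, hk⟩ := Function.ne_iff.mp hv0
      exact lt_of_lt_of_le (norm_pos_iff.mpr hk) (hi k (Finset.mem_univ k))
    have : Nontrivial (Fin n) := Fin.nontrivial_iff_two_le.mpr hn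
    obtain ⟨j0, hj0⟩ := exists_ne i
    obtain ⟨j, hjmem, hj⟩ := Finset.exists_max_image (univ.erase i)
      (fun k => ‖v k‖) ⟨j0, Finset.mem_erase.mpr ⟨hj0, Finset.mem_univ _⟩⟩
    have hji : j ≠ i := (Finset.mem_erase.mp hjmem).1
    -- row (column) equations
    have row : ∀ t : Fin n, (μ - ((M t t : ℝ) : ℂ)) * v t =
        ∑ k ∈ univ.erase t, v k * ((M k t : ℝ) : ℂ) := by
      intro t
      have h1 := hv t
      simp only [Matrix.map_apply] at h1
      have h2 : v t * ((M t t : ℝ) : ℂ) +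
          ∑ k ∈ univ.erase t, v k * ((M k t : ℝ) : ℂ) =
          ∑ k, v k * ((M k t : ℝ) : ℂ) :=
        Finset.add_sum_erase univ (fun k => v k * ((M k t : ℝ) : ℂ)) (Finset.mem_univ t)
      linear_combination -h1 - h2
    have absrow : ∀ t w : Fin n,
        (∀ k ∈ univ.erase t, ‖v k‖ ≤ ‖v w‖) →
        ‖μ - ((M t t : ℝ) : ℂ)‖ * ‖v t‖ ≤
          ‖v w‖ * ∑ k ∈ univ.erase t, M k t := by
      intro t w hw
      have h1 := congrArg norm (row t)
      rw [norm_mul] at h1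
      rw [h1]
      calc ‖∑ k ∈ univ.erase t, v k * ((M k t : ℝ) : ℂ)‖
          ≤ ∑ k ∈ univ.erase t, ‖v k * ((M k t : ℝ) : ℂ)‖ :=
            norm_sum_le _ _
        _ = ∑ k ∈ univ.erase t, ‖v k‖ * M k t := by
            refine Finset.sum_congr rfl fun k _ => ?_
            rw [norm_mul, Complex.norm_real, Real.norm_of_nonneg (hMnn k t)]
        _ ≤ ∑ k ∈ univ.erase t, ‖v w‖ * M k t :=
            Finset.sum_le_sum fun k hk =>
              mul_le_mul_of_nonneg_right (hw k hk) (hMnn k t)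
        _ = ‖v w‖ * ∑ k ∈ univ.erase t, M k t := by
            rw [Finset.mul_sum]
    have Hi := absrow i j hj
    have Hj := absrow j i (fun k _ => hi k (Finset.mem_univ k))
    have oval : ‖μ - ((M i i : ℝ) : ℂ)‖ *
        ‖μ - ((M j j : ℝ) : ℂ)‖ ≤
        (∑ k ∈ univ.erase i, M k i) * (∑ k ∈ univ.erase j, M k j) := by
      rcases eq_or_lt_of_le (norm_nonneg (v j)) with h0 | h0
      · have hz : ‖μ - ((M i i : ℝ) : ℂ)‖ = 0 := by
          have : ‖μ - ((M i i : ℝ) : ℂ)‖ * ‖v i‖ ≤ 0 := by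
            rw [← h0] at Hi
            simpa using Hi
          have h4 := norm_nonneg (μ - ((M i i : ℝ) : ℂ))
          nlinarith
        rw [hz, zero_mul]
        exact mul_nonneg (hCnn i) (hCnn j)
      · have hP : 0 < ‖v i‖ * ‖v j‖ := mul_pos hvi h0
        refine le_of_mul_le_mul_right ?_ hP
        have hmm := mul_le_mul Hi Hj
          (mul_nonneg (norm_nonneg _) (norm_nonneg _))
          (mul_nonneg (norm_nonneg _) (hCnn i))
        calc ‖μ - ((M i i : ℝ) : ℂ)‖ *
              ‖μ - ((M j j : ℝ) : ℂ)‖ *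
              (‖v i‖ * ‖v j‖)
            = (‖μ - ((M i i : ℝ) : ℂ)‖ * ‖v i‖) *
              (‖μ - ((M j j : ℝ) : ℂ)‖ * ‖v j‖) := by ring
          _ ≤ (‖v j‖ * ∑ k ∈ univ.erase i, M k i) *
              (‖v i‖ * ∑ k ∈ univ.erase j, M k j) := hmm
          _ = (∑ k ∈ univ.erase i, M k i) * (∑ k ∈ univ.erase j, M k j) *
              (‖v i‖ * ‖v j‖) := by ring
    have hT : (0:ℝ) ≤ A⁻¹ i i * A⁻¹ j j *
        (∑ k ∈ univ.erase i, B k i * p k i) * (∑ k ∈ univ.erase j, B k j * p k j) :=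
      mul_nonneg (mul_nonneg (mul_nonneg (hinv i i) (hinv j j)) (hSnn i)) (hSnn j)
    have key := keyq_aux (‖μ‖) (M i i) (M j j)
      (A⁻¹ i i * A⁻¹ j j * (∑ k ∈ univ.erase i, B k i * p k i) *
        (∑ k ∈ univ.erase j, B k j * p k j)) hT ?_
    · refine le_trans ?_ (Finset.le_sup' _
        (show (i, j) ∈ univ.offDiag from
          Finset.mem_offDiag.mpr ⟨Finset.mem_univ _, Finset.mem_univ _, hji.symm⟩))
      simp only [hMapp] at key
      calc ‖μ‖ ≤ _ := key
        _ = _ := by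
          congr 2
          ring
    · intro h1 h2
      have e1 : ‖μ‖ - M i i ≤ ‖μ - ((M i i : ℝ) : ℂ)‖ := by
        have h3 := norm_sub_norm_le μ ((M i i : ℝ) : ℂ)
        simpa [Complex.norm_real, Real.norm_eq_abs, abs_of_nonneg (hMnn i i)] using h3
      have e2 : ‖μ‖ - M j j ≤ ‖μ - ((M j j : ℝ) : ℂ)‖ := by
        have h3 := norm_sub_norm_le μ ((M j j : ℝ) : ℂ)
        simpa [Complex.norm_real, Real.norm_eq_abs, abs_of_nonneg (hMnn j j)] using h3
      calc (‖μ‖ - M i i) * (‖μ‖ - M j j)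
          ≤ ‖μ - ((M i i : ℝ) : ℂ)‖ * ‖μ - ((M j j : ℝ) : ℂ)‖ :=
            mul_le_mul e1 e2 (by linarith) (norm_nonneg _)
        _ ≤ (∑ k ∈ univ.erase i, M k i) * (∑ k ∈ univ.erase j, M k j) := oval
        _ ≤ (A⁻¹ i i * ∑ k ∈ univ.erase i, B k i * p k i) *
            (A⁻¹ j j * ∑ k ∈ univ.erase j, B k j * p k j) :=
            mul_le_mul (hCS i) (hCS j) (hCnn j) (mul_nonneg (hinv i i) (hSnn i))
        _ = A⁻¹ i i * A⁻¹ j j * (∑ k ∈ univ.erase i, B k i * p k i) *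
            (∑ k ∈ univ.erase j, B k j * p k j) := by ring
  · obtain ⟨q, hq⟩ := hne
    refine le_trans ?_ (Finset.le_sup' _ hq)
    have h1 := mul_nonneg (hB q.1 q.1) (hinv q.1 q.1)
    have h2 := mul_nonneg (hB q.2 q.2) (hinv q.2 q.2)
    have h3 := Real.sqrt_nonneg ((B q.1 q.1 * A⁻¹ q.1 q.1 - B q.2 q.2 * A⁻¹ q.2 q.2) ^ 2 +
      4 * A⁻¹ q.1 q.1 * A⁻¹ q.2 q.2 * (∑ k ∈ univ.erase q.1, B k q.1 * p k q.1) *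
      (∑ k ∈ univ.erase q.2, B k q.2 * p k q.2))
    linarith
end

section
/- For nonnegative reals a, b, s, t with the property that b + b·t ≤ a + a·s (assuming WLOG ordering), one has a + b + [ (a - b)² + 4 a b s t ]^{1/2} ≤ 2 max{ a(1+s), b(1+t) }; consequently, the Brauer-type bound (1/2) max_{i≠j}{ b_{ii}α_{ii} + b_{jj}α_{jj} + [ (b_{ii}α_{ii} - b_{jj}α_{jj})² + 4 α_{ii}α_{jj} S_i S_j ]^{1/2} } is at most max_i { b_{ii}α_{ii} + α_{ii} S_i }, where S_i = Σ_{k≠i} b_{ki} p_{ki}. -/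
open Finset

lemma key_ineq (A B X Y : ℝ) (hB : 0 ≤ B) (hX : 0 ≤ X) (hY : 0 ≤ Y)
    (hord : B + Y ≤ A + X) :
    A + B + Real.sqrt ((A - B) ^ 2 + 4 * X * Y) ≤ 2 * (A + X) := by
  have hR : 0 ≤ A - B + 2 * X := by linarith
  have hsq : (A - B) ^ 2 + 4 * X * Y ≤ (A - B + 2 * X) ^ 2 := by nlinarith
  have h1 : Real.sqrt ((A - B) ^ 2 + 4 * X * Y) ≤ A - B + 2 * X := by
    calc Real.sqrt ((A - B) ^ 2 + 4 * X * Y) ≤ Real.sqrt ((A - B + 2 * X) ^ 2) :=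
          Real.sqrt_le_sqrt hsq
      _ = A - B + 2 * X := Real.sqrt_sq hR
  linarith

/-- Elementary inequality: for nonnegative reals `a, b, s, t` with `b + b*t ≤ a + a*s`,
`a + b + √((a-b)² + 4abst) ≤ 2 max{a(1+s), b(1+t)}`; consequently the Brauer-type pairwise
bound is at most the Gershgorin-type row-wise bound `max_i (b_ii α_ii + α_ii S_i)`. -/
theorem brauer_le_gershgorin_bound {n : ℕ}
    (a b s t : ℝ) (ha : 0 ≤ a) (hb : 0 ≤ b) (hs : 0 ≤ s) (ht : 0 ≤ t)
    (hord : b + b * t ≤ a + a * s)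
    (α bd S : Fin n → ℝ)
    (hα : ∀ i, 0 ≤ α i) (hbd : ∀ i, 0 ≤ bd i) (hS : ∀ i, 0 ≤ S i)
    (hne : (univ : Finset (Fin n)).Nonempty) :
    a + b + Real.sqrt ((a - b) ^ 2 + 4 * a * b * s * t) ≤
        2 * max (a * (1 + s)) (b * (1 + t)) ∧
    ∀ i j : Fin n, i ≠ j →
      (1 / 2) * (bd i * α i + bd j * α j +
          Real.sqrt ((bd i * α i - bd j * α j) ^ 2 + 4 * α i * α j * S i * S j)) ≤
        univ.sup' hne (fun m => bd m * α m + α m * S m) := by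
  constructor
  · have h := key_ineq a b (a * s) (b * t) hb (mul_nonneg ha hs) (mul_nonneg hb ht) hord
    have hmax : a * (1 + s) ≤ max (a * (1 + s)) (b * (1 + t)) := le_max_left _ _
    have e : 4 * (a * s) * (b * t) = 4 * a * b * s * t := by ring
    rw [e] at h
    nlinarith [h, hmax]
  · intro i j hij
    rcases le_total (bd j * α j + α j * S j) (bd i * α i + α i * S i) with h | h
    · have hk := key_ineq (bd i * α i) (bd j * α j) (α i * S i) (α j * S j)
        (mul_nonneg (hbd j) (hα j)) (mul_nonneg (hα i) (hS i))
        (mul_nonneg (hα j) (hS j)) h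
      have e : 4 * (α i * S i) * (α j * S j) = 4 * α i * α j * S i * S j := by ring
      rw [e] at hk
      have hsup : bd i * α i + α i * S i ≤
          univ.sup' hne (fun m => bd m * α m + α m * S m) :=
        le_sup' (fun m => bd m * α m + α m * S m) (mem_univ i)
      linarith
    · have hk := key_ineq (bd j * α j) (bd i * α i) (α j * S j) (α i * S i)
        (mul_nonneg (hbd i) (hα i)) (mul_nonneg (hα j) (hS j))
        (mul_nonneg (hα i) (hS i)) h
      have e1 : (bd j * α j - bd i * α i) ^ 2 = (bd i * α i - bd j * α j) ^ 2 := by ring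
      have e : 4 * (α j * S j) * (α i * S i) = 4 * α i * α j * S i * S j := by ring
      rw [e1, e] at hk
      have hsup : bd j * α j + α j * S j ≤
          univ.sup' hne (fun m => bd m * α m + α m * S m) :=
        le_sup' (fun m => bd m * α m + α m * S m) (mem_univ j)
      linarith
end

section
/- Let A be a nonsingular M-matrix with inverse [α_{ij}], and suppose 0 ≤ p_{ki} < 1 satisfy α_{ki} ≤ p_{ki} α_{ii} for all k ≠ i. Then the minimum eigenvalue τ(A) = 1/ρ(A^{-1}) satisfies τ(A) ≥ 2 / max_{i≠j}{ α_{ii} + α_{jj} + [ (α_{ii} - α_{jj})² + 4 α_{ii}α_{jj} (Σ_{k≠i} p_{ki})(Σ_{k≠j} p_{kj}) ]^{1/2} }. -/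
open Finset

lemma quad_bound {a b r x : ℝ} (hr : 0 ≤ r)
    (h : x ≤ max a b ∨ (x - a) * (x - b) ≤ r) :
    x ≤ (a + b + Real.sqrt ((a - b) ^ 2 + 4 * r)) / 2 := by
  have hs0 : 0 ≤ Real.sqrt ((a - b) ^ 2 + 4 * r) := Real.sqrt_nonneg _
  have hs : Real.sqrt ((a - b) ^ 2 + 4 * r) ^ 2 = (a - b) ^ 2 + 4 * r :=
    Real.sq_sqrt (by positivity)
  have hab : |a - b| ≤ Real.sqrt ((a - b) ^ 2 + 4 * r) := by
    rw [← Real.sqrt_sq_eq_abs]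
    exact Real.sqrt_le_sqrt (by linarith)
  rw [abs_sub_le_iff] at hab
  rcases h with h | h
  · rcases max_cases a b with ⟨he, _⟩ | ⟨he, _⟩ <;> rw [he] at h <;> linarith
  · by_contra hc
    push_neg at hc
    nlinarith [hs0, hs, h]

lemma spectrum_exists_left_eigvec {n : ℕ} {M : Matrix (Fin n) (Fin n) ℂ} {μ : ℂ}
    (hμ : μ ∈ spectrum ℂ M) :
    ∃ v : Fin n → ℂ, v ≠ 0 ∧ ∀ i, ∑ k, v k * M k i = μ * v i := by
  rw [spectrum.mem_iff] at hμ
  rw [Matrix.isUnit_iff_isUnit_det, isUnit_iff_ne_zero, not_not] at hμ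
  obtain ⟨v, hv0, hv⟩ := (Matrix.exists_vecMul_eq_zero_iff).2 hμ
  refine ⟨v, hv0, fun i => ?_⟩
  have h := congrFun hv i
  simp only [Matrix.vecMul, dotProduct, Matrix.sub_apply, Pi.zero_apply,
    Matrix.algebraMap_matrix_apply, Algebra.algebraMap_self_apply, mul_sub,
    Finset.sum_sub_distrib, sub_eq_zero, mul_ite, mul_zero] at h
  rw [Finset.sum_ite_eq' univ i (fun k => v k * μ)] at h
  simp only [Finset.mem_univ, if_true] at h
  linear_combination -h

lemma spectrum_nonempty' {n : ℕ} (hn : 2 ≤ n) (M : Matrix (Fin n) (Fin n) ℂ) :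
    (spectrum ℂ M).Nonempty := by
  have : Nontrivial (Fin n → ℂ) := by
    have : Nonempty (Fin n) := ⟨⟨0, by omega⟩⟩
    infer_instance
  obtain ⟨μ, hμ⟩ := Module.End.exists_eigenvalue (Matrix.toLinAlgEquiv' M)
  rw [Module.End.hasEigenvalue_iff_mem_spectrum] at hμ
  exact ⟨μ, (AlgEquiv.spectrum_eq Matrix.toLinAlgEquiv' M) ▸ hμ⟩

lemma brauer_pair_bound {n : ℕ} (hn : 2 ≤ n) (B : Matrix (Fin n) (Fin n) ℝ)
    (hB : ∀ i j, 0 ≤ B i j) {μ : ℂ} (hμ : μ ∈ spectrum ℂ (B.map Complex.ofReal)) :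
    ∃ i j, i ≠ j ∧ ‖μ‖ ≤
      (B i i + B j j + Real.sqrt ((B i i - B j j) ^ 2 +
        4 * ((∑ k ∈ univ.erase i, B k i) * (∑ k ∈ univ.erase j, B k j)))) / 2 := by
  have hnt : Nontrivial (Fin n) := Fin.nontrivial_iff_two_le.mpr hn
  obtain ⟨v, hv0, key⟩ := spectrum_exists_left_eigvec hμ
  simp only [Matrix.map_apply] at key
  obtain ⟨i, -, hi⟩ := Finset.exists_max_image univ (fun k => ‖v k‖) univ_nonempty
  simp only [mem_univ, true_implies] at hi
  have hvi : v i ≠ 0 := by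
    obtain ⟨k, hk⟩ := Function.ne_iff.mp hv0
    intro h
    apply hk
    have h2 := hi k
    rw [h, norm_zero] at h2
    exact norm_eq_zero.mp (le_antisymm h2 (norm_nonneg _))
  obtain ⟨j₀, hj₀i⟩ := exists_ne i
  obtain ⟨j, hjmem, hj⟩ := Finset.exists_max_image (univ.erase i)
    (fun k => ‖v k‖) ⟨j₀, mem_erase.mpr ⟨hj₀i, mem_univ _⟩⟩
  have hji : j ≠ i := (mem_erase.mp hjmem).1
  refine ⟨i, j, hji.symm, ?_⟩
  have hRi0 : 0 ≤ ∑ k ∈ univ.erase i, B k i := Finset.sum_nonneg fun k _ => hB k i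
  have hRj0 : 0 ≤ ∑ k ∈ univ.erase j, B k j := Finset.sum_nonneg fun k _ => hB k j
  have hr : 0 ≤ (∑ k ∈ univ.erase i, B k i) * (∑ k ∈ univ.erase j, B k j) :=
    mul_nonneg hRi0 hRj0
  have eqi : (μ - (B i i : ℂ)) * v i = ∑ k ∈ univ.erase i, v k * (B k i : ℂ) := by
    have h := key i
    rw [← Finset.sum_erase_add univ _ (mem_univ i)] at h
    linear_combination -h
  have eqj : (μ - (B j j : ℂ)) * v j = ∑ k ∈ univ.erase j, v k * (B k j : ℂ) := by
    have h := key j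
    rw [← Finset.sum_erase_add univ _ (mem_univ j)] at h
    linear_combination -h
  have claim1 : ‖μ - (B i i : ℂ)‖ * ‖v i‖ ≤
      ‖v j‖ * ∑ k ∈ univ.erase i, B k i := by
    rw [← norm_mul, eqi]
    calc ‖∑ k ∈ univ.erase i, v k * (B k i : ℂ)‖
        ≤ ∑ k ∈ univ.erase i, ‖v k * (B k i : ℂ)‖ := norm_sum_le _ _
      _ ≤ ∑ k ∈ univ.erase i, ‖v j‖ * B k i := by
          refine Finset.sum_le_sum fun k hk => ?_
          rw [norm_mul, Complex.norm_real, Real.norm_of_nonneg (hB k i)]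
          exact mul_le_mul_of_nonneg_right (hj k hk) (hB k i)
      _ = ‖v j‖ * ∑ k ∈ univ.erase i, B k i := by rw [Finset.mul_sum]
  have claim2 : ‖μ - (B j j : ℂ)‖ * ‖v j‖ ≤
      ‖v i‖ * ∑ k ∈ univ.erase j, B k j := by
    rw [← norm_mul, eqj]
    calc ‖∑ k ∈ univ.erase j, v k * (B k j : ℂ)‖
        ≤ ∑ k ∈ univ.erase j, ‖v k * (B k j : ℂ)‖ := norm_sum_le _ _
      _ ≤ ∑ k ∈ univ.erase j, ‖v i‖ * B k j := by
          refine Finset.sum_le_sum fun k _ => ?_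
          rw [norm_mul, Complex.norm_real, Real.norm_of_nonneg (hB k j)]
          exact mul_le_mul_of_nonneg_right (hi k) (hB k j)
      _ = ‖v i‖ * ∑ k ∈ univ.erase j, B k j := by rw [Finset.mul_sum]
  have ha0 : 0 ≤ B i i := hB i i
  have hb0 : 0 ≤ B j j := hB j j
  by_cases hcase : ‖μ‖ ≤ max (B i i) (B j j)
  · exact quad_bound hr (Or.inl hcase)
  · push_neg at hcase
    have hvipos : 0 < ‖v i‖ := norm_pos_iff.mpr hvi
    by_cases hvj : v j = 0
    · exfalso
      have hsum : (μ - (B i i : ℂ)) * v i = 0 := by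
        rw [eqi]
        refine Finset.sum_eq_zero fun k hk => ?_
        have h2 := hj k hk
        rw [hvj, norm_zero] at h2
        rw [norm_eq_zero.mp (le_antisymm h2 (norm_nonneg _)), zero_mul]
      rcases mul_eq_zero.mp hsum with h | h
      · have hμa : μ = (B i i : ℂ) := sub_eq_zero.mp h
        rw [hμa, Complex.norm_real, Real.norm_of_nonneg ha0] at hcase
        have := le_max_left (B i i) (B j j)
        linarith
      · exact hvi h
    · have hvjpos : 0 < ‖v j‖ := norm_pos_iff.mpr hvj
      have key2 : ‖μ - (B i i : ℂ)‖ * ‖μ - (B j j : ℂ)‖ ≤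
          (∑ k ∈ univ.erase i, B k i) * (∑ k ∈ univ.erase j, B k j) := by
        have hmul := mul_le_mul claim1 claim2
          (mul_nonneg (norm_nonneg _) (norm_nonneg _))
          (mul_nonneg (norm_nonneg _) hRi0)
        by_contra hc
        push_neg at hc
        have h2 := mul_lt_mul_of_pos_right hc (mul_pos hvipos hvjpos)
        nlinarith [hmul]
      refine quad_bound hr (Or.inr ?_)
      have hxa : ‖μ‖ - B i i ≤ ‖μ - (B i i : ℂ)‖ := by
        have h1 := abs_norm_sub_norm_le μ ((B i i : ℂ))
        rw [Complex.norm_real, Real.norm_of_nonneg ha0] at h1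
        exact le_trans (le_abs_self _) h1
      have hxb : ‖μ‖ - B j j ≤ ‖μ - (B j j : ℂ)‖ := by
        have h1 := abs_norm_sub_norm_le μ ((B j j : ℂ))
        rw [Complex.norm_real, Real.norm_of_nonneg hb0] at h1
        exact le_trans (le_abs_self _) h1
      have hxa0 : 0 ≤ ‖μ‖ - B i i := by
        have := le_max_left (B i i) (B j j); linarith
      have hxb0 : 0 ≤ ‖μ‖ - B j j := by
        have := le_max_right (B i i) (B j j); linarith
      calc (‖μ‖ - B i i) * (‖μ‖ - B j j)
          ≤ ‖μ - (B i i : ℂ)‖ * ‖μ - (B j j : ℂ)‖ :=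
            mul_le_mul hxa hxb hxb0 (norm_nonneg _)
        _ ≤ _ := key2

/-- Lower bound for the minimum eigenvalue `τ(A) = 1/ρ(A⁻¹)` of an `M`-matrix `A`:
`τ(A) ≥ 2 / max_{i≠j} { α_ii + α_jj + √((α_ii-α_jj)² + 4 α_ii α_jj (∑_{k≠i}p_ki)(∑_{k≠j}p_kj)) }`. -/
theorem tau_lower_bound_brauer {n : ℕ} (hn : 2 ≤ n)
    (A : Matrix (Fin n) (Fin n) ℝ)
    (hA : IsUnit A.det)
    (hoff : ∀ i j, i ≠ j → A i j ≤ 0)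
    (hinv : ∀ i j, 0 ≤ A⁻¹ i j)
    (p : Fin n → Fin n → ℝ)
    (hp0 : ∀ k i, k ≠ i → 0 ≤ p k i) (hp1 : ∀ k i, k ≠ i → p k i < 1)
    (hpa : ∀ k i, k ≠ i → A⁻¹ k i ≤ p k i * A⁻¹ i i)
    (hne : (univ.offDiag : Finset (Fin n × Fin n)).Nonempty) :
    2 / (univ.offDiag.sup' hne (fun q =>
        A⁻¹ q.1 q.1 + A⁻¹ q.2 q.2 +
          Real.sqrt ((A⁻¹ q.1 q.1 - A⁻¹ q.2 q.2) ^ 2 +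
            4 * A⁻¹ q.1 q.1 * A⁻¹ q.2 q.2 *
              (∑ k ∈ univ.erase q.1, p k q.1) * (∑ k ∈ univ.erase q.2, p k q.2)))) ≤
      1 / specRad A⁻¹ := by
  set f : Fin n × Fin n → ℝ := fun q =>
        A⁻¹ q.1 q.1 + A⁻¹ q.2 q.2 +
          Real.sqrt ((A⁻¹ q.1 q.1 - A⁻¹ q.2 q.2) ^ 2 +
            4 * A⁻¹ q.1 q.1 * A⁻¹ q.2 q.2 *
              (∑ k ∈ univ.erase q.1, p k q.1) * (∑ k ∈ univ.erase q.2, p k q.2)) with hf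
  set M := univ.offDiag.sup' hne f with hM
  -- diagonal entries of A⁻¹ are positive
  have hdiag : ∀ i, 0 < A⁻¹ i i := by
    intro i
    have h := congrFun (congrFun (Matrix.nonsing_inv_mul A hA) i) i
    rw [Matrix.mul_apply, Matrix.one_apply_eq] at h
    rw [← Finset.add_sum_erase univ _ (mem_univ i)] at h
    have hrest : ∑ k ∈ univ.erase i, A⁻¹ i k * A k i ≤ 0 :=
      Finset.sum_nonpos fun k hk =>
        mul_nonpos_of_nonneg_of_nonpos (hinv i k) (hoff k i (mem_erase.mp hk).1)
    rcases (hinv i i).lt_or_eq with h1 | h1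
    · exact h1
    · exfalso; rw [← h1] at h; nlinarith
  -- key spectral bound
  have hbound : ∀ z ∈ (fun z : ℂ => ‖z‖) '' spectrum ℂ ((A⁻¹).map Complex.ofReal), z ≤ M / 2 := by
    rintro - ⟨μ, hμ, rfl⟩
    obtain ⟨i, j, hij, hb⟩ := brauer_pair_bound hn A⁻¹ hinv hμ
    refine hb.trans ?_
    have hPi : 0 ≤ ∑ k ∈ univ.erase i, p k i :=
      Finset.sum_nonneg fun k hk => hp0 k i (mem_erase.mp hk).1
    have hPj : 0 ≤ ∑ k ∈ univ.erase j, p k j :=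
      Finset.sum_nonneg fun k hk => hp0 k j (mem_erase.mp hk).1
    have hRi : (∑ k ∈ univ.erase i, A⁻¹ k i) ≤ (∑ k ∈ univ.erase i, p k i) * A⁻¹ i i := by
      rw [Finset.sum_mul]
      exact Finset.sum_le_sum fun k hk => hpa k i (mem_erase.mp hk).1
    have hRj : (∑ k ∈ univ.erase j, A⁻¹ k j) ≤ (∑ k ∈ univ.erase j, p k j) * A⁻¹ j j := by
      rw [Finset.sum_mul]
      exact Finset.sum_le_sum fun k hk => hpa k j (mem_erase.mp hk).1
    have hRi0 : 0 ≤ ∑ k ∈ univ.erase i, A⁻¹ k i :=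
      Finset.sum_nonneg fun k _ => hinv k i
    have hRj0 : 0 ≤ ∑ k ∈ univ.erase j, A⁻¹ k j :=
      Finset.sum_nonneg fun k _ => hinv k j
    have hsqrt : Real.sqrt ((A⁻¹ i i - A⁻¹ j j) ^ 2 +
          4 * ((∑ k ∈ univ.erase i, A⁻¹ k i) * (∑ k ∈ univ.erase j, A⁻¹ k j))) ≤
        Real.sqrt ((A⁻¹ i i - A⁻¹ j j) ^ 2 +
          4 * A⁻¹ i i * A⁻¹ j j * (∑ k ∈ univ.erase i, p k i) * (∑ k ∈ univ.erase j, p k j)) := by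
      apply Real.sqrt_le_sqrt
      have : (∑ k ∈ univ.erase i, A⁻¹ k i) * (∑ k ∈ univ.erase j, A⁻¹ k j) ≤
          ((∑ k ∈ univ.erase i, p k i) * A⁻¹ i i) * ((∑ k ∈ univ.erase j, p k j) * A⁻¹ j j) :=
        mul_le_mul hRi hRj hRj0 (mul_nonneg hPi (hdiag i).le)
      nlinarith
    have hle : f (i, j) ≤ M := Finset.le_sup' f (mem_offDiag.mpr ⟨mem_univ _, mem_univ _, hij⟩)
    rw [hf] at hle
    simp only at hle
    linarith [hsqrt]
  -- M is positive
  obtain ⟨q, hq⟩ := hne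
  have hMq : f q ≤ M := Finset.le_sup' f hq
  have hfq : 0 < f q := by
    have h1 := hdiag q.1
    have h2 := hdiag q.2
    have := Real.sqrt_nonneg ((A⁻¹ q.1 q.1 - A⁻¹ q.2 q.2) ^ 2 +
            4 * A⁻¹ q.1 q.1 * A⁻¹ q.2 q.2 *
              (∑ k ∈ univ.erase q.1, p k q.1) * (∑ k ∈ univ.erase q.2, p k q.2))
    rw [hf]; dsimp only; linarith
  have hMpos : 0 < M := hfq.trans_le hMq
  -- specRad bounds
  have hsle : specRad A⁻¹ ≤ M / 2 := Real.sSup_le hbound (by linarith)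
  have hspos : 0 < specRad A⁻¹ := by
    obtain ⟨μ, hμ⟩ := spectrum_nonempty' hn ((A⁻¹).map Complex.ofReal)
    have hunit : IsUnit ((A⁻¹).map Complex.ofReal) := by
      rw [Matrix.isUnit_iff_isUnit_det]
      have : ((A⁻¹).map Complex.ofReal).det = Complex.ofReal (A⁻¹.det) :=
        (RingHom.map_det Complex.ofRealHom A⁻¹).symm ▸ rfl
      rw [this, isUnit_iff_ne_zero, Ne, Complex.ofReal_eq_zero]
      exact fun h => by simpa [h] using (Matrix.isUnit_nonsing_inv_det A hA)
    have hμ0 : μ ≠ 0 := by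
      intro h
      rw [h, spectrum.zero_mem_iff] at hμ
      exact hμ hunit
    have habs : 0 < ‖μ‖ := norm_pos_iff.mpr hμ0
    have hmem : ‖μ‖ ∈ (fun z : ℂ => ‖z‖) '' spectrum ℂ ((A⁻¹).map Complex.ofReal) :=
      ⟨μ, hμ, rfl⟩
    have : ‖μ‖ ≤ specRad A⁻¹ :=
      le_csSup ⟨M / 2, fun z hz => hbound z hz⟩ hmem
    linarith
  have h1 : 1 / (M / 2) ≤ 1 / specRad A⁻¹ := one_div_le_one_div_of_le hspos hsle
  rwa [one_div_div] at h1
end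

section
/- Let A be a nonsingular M-matrix with inverse [α_{ij}], and suppose 0 ≤ p_{ki} < 1 satisfy α_{ki} ≤ p_{ki} α_{ii} for all k ≠ i. Then τ(A) ≥ 1 / max_i { (1 + Σ_{k≠i} p_{ki}) α_{ii} }. -/
open Finset Matrix

lemma spectrum_transpose_eq {n : ℕ} (B : Matrix (Fin n) (Fin n) ℂ) :
    spectrum ℂ Bᵀ = spectrum ℂ B := by
  ext μ
  simp only [spectrum.mem_iff, not_iff_not]
  constructor <;> intro h
  · rw [← Matrix.isUnit_transpose]
    convert h using 1
    ext i j
    by_cases hij : i = j <;>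
      simp [Matrix.transpose_apply, Matrix.algebraMap_matrix_apply, hij, eq_comm]
  · rw [← Matrix.isUnit_transpose] at h
    convert h using 1
    ext i j
    by_cases hij : i = j <;>
      simp [Matrix.transpose_apply, Matrix.algebraMap_matrix_apply, hij, eq_comm]

/-- Lower bound for the minimum eigenvalue `τ(A) = 1/ρ(A⁻¹)` of an `M`-matrix `A`:
`τ(A) ≥ 1 / max_i { (1 + ∑_{k≠i} p_ki) α_ii }`. -/
theorem tau_lower_bound_gershgorin {n : ℕ} (hn : 1 ≤ n)
    (A : Matrix (Fin n) (Fin n) ℝ)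
    (hA : IsUnit A.det)
    (hoff : ∀ i j, i ≠ j → A i j ≤ 0)
    (hinv : ∀ i j, 0 ≤ A⁻¹ i j)
    (p : Fin n → Fin n → ℝ)
    (hp0 : ∀ k i, k ≠ i → 0 ≤ p k i) (hp1 : ∀ k i, k ≠ i → p k i < 1)
    (hpa : ∀ k i, k ≠ i → A⁻¹ k i ≤ p k i * A⁻¹ i i)
    (hne : (univ : Finset (Fin n)).Nonempty) :
    1 / (univ.sup' hne (fun i => (1 + ∑ k ∈ univ.erase i, p k i) * A⁻¹ i i)) ≤
      1 / specRad A⁻¹ := by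
  classical
  set B : Matrix (Fin n) (Fin n) ℂ := (A⁻¹).map Complex.ofReal with hB
  set M : ℝ := univ.sup' hne (fun i => (1 + ∑ k ∈ univ.erase i, p k i) * A⁻¹ i i) with hM
  -- every element of the spectrum of B is bounded in absolute value by M
  have key : ∀ μ ∈ spectrum ℂ B, ‖μ‖ ≤ M := by
    intro μ hμ
    -- transfer to transpose and use Gershgorin
    have hμT : μ ∈ spectrum ℂ Bᵀ := by rwa [spectrum_transpose_eq]
    have hEig : Module.End.HasEigenvalue (Matrix.toLin' Bᵀ) μ := by
      apply (Module.End.hasEigenvalue_iff_mem_spectrum (f := Matrix.toLin' Bᵀ) (μ := μ)).2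
      rw [show Matrix.toLin' Bᵀ = Matrix.toLinAlgEquiv' Bᵀ from rfl, AlgEquiv.spectrum_eq]
      exact hμT
    obtain ⟨i, hi⟩ := eigenvalue_mem_ball hEig
    rw [Metric.mem_closedBall, dist_eq_norm] at hi
    have hBii : Bᵀ i i = (A⁻¹ i i : ℂ) := by simp [hB, Matrix.transpose_apply]
    have habs : ‖μ‖ ≤ A⁻¹ i i + ∑ j ∈ univ.erase i, ‖Bᵀ i j‖ := by
      calc ‖μ‖ = ‖μ‖ := rfl
        _ ≤ ‖Bᵀ i i‖ + ‖μ - Bᵀ i i‖ := by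
              simpa using norm_add_le (Bᵀ i i) (μ - Bᵀ i i)
        _ ≤ ‖Bᵀ i i‖ + ∑ j ∈ univ.erase i, ‖Bᵀ i j‖ := by linarith
        _ = A⁻¹ i i + ∑ j ∈ univ.erase i, ‖Bᵀ i j‖ := by
              rw [hBii, Complex.norm_real, Real.norm_eq_abs, abs_of_nonneg (hinv i i)]
    have hsum : ∑ j ∈ univ.erase i, ‖Bᵀ i j‖ ≤ (∑ k ∈ univ.erase i, p k i) * A⁻¹ i i := by
      rw [Finset.sum_mul]
      apply Finset.sum_le_sum
      intro j hj
      have hji : j ≠ i := (Finset.mem_erase.mp hj).1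
      have : ‖Bᵀ i j‖ = A⁻¹ j i := by
        simp [hB, Matrix.transpose_apply, Complex.norm_real, Real.norm_eq_abs,
          abs_of_nonneg (hinv j i)]
      rw [this]
      exact hpa j i hji
    have : ‖μ‖ ≤ (1 + ∑ k ∈ univ.erase i, p k i) * A⁻¹ i i := by
      rw [add_mul, one_mul]
      linarith
    refine this.trans ?_
    rw [hM]
    exact Finset.le_sup' (fun i => (1 + ∑ k ∈ univ.erase i, p k i) * A⁻¹ i i) (Finset.mem_univ i)
  -- the spectrum is nonempty and does not contain 0
  have : Nontrivial (Fin n → ℂ) := by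
    have : 0 < n := hn
    exact ⟨⟨fun _ => 0, fun _ => 1, by
      intro h
      have := congrFun h ⟨0, this⟩
      simp at this⟩⟩
  obtain ⟨μ₀, hμ₀⟩ := Module.End.exists_eigenvalue (Matrix.toLin' B)
  have hμ₀mem : μ₀ ∈ spectrum ℂ B := by
    have := (Module.End.hasEigenvalue_iff_mem_spectrum).1 hμ₀
    rwa [show Matrix.toLin' B = Matrix.toLinAlgEquiv' B from rfl,
      AlgEquiv.spectrum_eq] at this
  have hBunit : IsUnit B := by
    have h1 : IsUnit A⁻¹ := (Matrix.isUnit_iff_isUnit_det _).mpr (A.isUnit_nonsing_inv_det hA)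
    have h2 := h1.map (RingHom.mapMatrix (Complex.ofRealHom) :
      Matrix (Fin n) (Fin n) ℝ →+* Matrix (Fin n) (Fin n) ℂ)
    have h3 : (RingHom.mapMatrix (Complex.ofRealHom)) A⁻¹ = B := by
      rw [hB]; rfl
    rwa [h3] at h2
  have hμ₀ne : μ₀ ≠ 0 := by
    intro h
    exact (spectrum.zero_notMem_iff ℂ).mpr hBunit (h ▸ hμ₀mem)
  have hμ₀pos : 0 < ‖μ₀‖ := by
    simpa using norm_pos_iff.mpr hμ₀ne
  -- properties of the sSup
  have hSne : ((fun z : ℂ => ‖z‖) '' spectrum ℂ B).Nonempty := ⟨_, ⟨μ₀, hμ₀mem, rfl⟩⟩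
  have hbdd : ∀ x ∈ (fun z : ℂ => ‖z‖) '' spectrum ℂ B, x ≤ M := by
    rintro x ⟨μ, hμ, rfl⟩; exact key μ hμ
  have hρ_le : specRad A⁻¹ ≤ M := by
    rw [specRad, ← hB]
    exact csSup_le hSne hbdd
  have hρ_pos : 0 < specRad A⁻¹ := by
    rw [specRad, ← hB]
    have : ‖μ₀‖ ≤ sSup ((fun z : ℂ => ‖z‖) '' spectrum ℂ B) :=
      le_csSup ⟨M, hbdd⟩ ⟨μ₀, hμ₀mem, rfl⟩
    linarith
  exact one_div_le_one_div_of_le hρ_pos hρ_le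
end

section
/- If A is an M-matrix whose inverse is doubly stochastic, then a_{ii} = Σ_{j≠i} |a_{ij}| + 1 = Σ_{j≠i} |a_{ji}| + 1 for every i; i.e., each diagonal entry exceeds the corresponding off-diagonal row sum and column sum by exactly 1. -/
open Finset

/-- If `A` is an `M`-matrix whose inverse is doubly stochastic, then
`a_ii = ∑_{j≠i} |a_ij| + 1 = ∑_{j≠i} |a_ji| + 1` for every `i`. -/
theorem diag_eq_offdiag_sum_add_one {n : ℕ}
    (A : Matrix (Fin n) (Fin n) ℝ)
    (hA : IsUnit A.det)
    (hoff : ∀ i j, i ≠ j → A i j ≤ 0)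
    (hinv : ∀ i j, 0 ≤ A⁻¹ i j)
    (hrow : ∀ i, ∑ j, A⁻¹ i j = 1)
    (hcol : ∀ j, ∑ i, A⁻¹ i j = 1) :
    ∀ i, A i i = (∑ j ∈ univ.erase i, |A i j|) + 1 ∧
      A i i = (∑ j ∈ univ.erase i, |A j i|) + 1 := by
  have hmul : A * A⁻¹ = 1 := Matrix.mul_nonsing_inv A hA
  have hmul' : A⁻¹ * A = 1 := Matrix.nonsing_inv_mul A hA
  have hrowA : ∀ i, ∑ j, A i j = 1 := by
    intro i
    calc ∑ j, A i j = ∑ j, A i j * ∑ k, A⁻¹ j k := by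
          simp [hrow]
      _ = ∑ k, ∑ j, A i j * A⁻¹ j k := by
          rw [Finset.sum_comm]
          simp [Finset.mul_sum]
      _ = ∑ k, (A * A⁻¹) i k := by simp [Matrix.mul_apply]
      _ = 1 := by simp [hmul, Matrix.one_apply]
  have hcolA : ∀ j, ∑ i, A i j = 1 := by
    intro j
    calc ∑ i, A i j = ∑ i, (∑ k, A⁻¹ k i) * A i j := by
          simp [hcol]
      _ = ∑ k, ∑ i, A⁻¹ k i * A i j := by
          rw [Finset.sum_comm]
          simp [Finset.sum_mul]
      _ = ∑ k, (A⁻¹ * A) k j := by simp [Matrix.mul_apply]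
      _ = 1 := by simp [hmul', Matrix.one_apply]
  intro i
  have h1 : A i i + ∑ j ∈ univ.erase i, A i j = 1 := by
    rw [Finset.add_sum_erase _ _ (Finset.mem_univ i)]; exact hrowA i
  have h2 : A i i + ∑ j ∈ univ.erase i, A j i = 1 := by
    rw [Finset.add_sum_erase univ (fun j => A j i) (Finset.mem_univ i)]; exact hcolA i
  have e1 : ∑ j ∈ univ.erase i, |A i j| = -∑ j ∈ univ.erase i, A i j := by
    rw [← Finset.sum_neg_distrib]
    exact Finset.sum_congr rfl fun j hj =>
      abs_of_nonpos (hoff i j (Ne.symm (Finset.ne_of_mem_erase hj)))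
  have e2 : ∑ j ∈ univ.erase i, |A j i| = -∑ j ∈ univ.erase i, A j i := by
    rw [← Finset.sum_neg_distrib]
    exact Finset.sum_congr rfl fun j hj =>
      abs_of_nonpos (hoff j i (Finset.ne_of_mem_erase hj))
  constructor <;> [rw [e1]; rw [e2]] <;> linarith
end

section
/- Let A be an M-matrix with all diagonal entries equal and with A^{-1} doubly stochastic. Then the spectral radius of the Jacobi iteration matrix J_A = D^{-1}(D - A) (D the diagonal of A) equals d = 1 - 1/a_{11}, and moreover ρ(J_A) = d ≥ r_i for every i, where r_i = max_{j≠i} |a_{ji}| / (|a_{jj}| - Σ_{k≠j,i} |a_{jk}|). -/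
open Finset Matrix

lemma mem_spectrum_iff_eigen {n : ℕ} (B : Matrix (Fin n) (Fin n) ℂ) (μ : ℂ) :
    μ ∈ spectrum ℂ B ↔ ∃ v, v ≠ 0 ∧ B *ᵥ v = μ • v := by
  rw [spectrum.mem_iff, Matrix.isUnit_iff_isUnit_det, isUnit_iff_ne_zero, not_not,
    ← Matrix.exists_mulVec_eq_zero_iff]
  refine exists_congr fun v => and_congr_right fun hv => ?_
  rw [Matrix.sub_mulVec, sub_eq_zero]
  have : (algebraMap ℂ (Matrix (Fin n) (Fin n) ℂ)) μ *ᵥ v = μ • v := by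
    rw [Algebra.algebraMap_eq_smul_one, Matrix.smul_mulVec, Matrix.one_mulVec]
  rw [this]
  exact eq_comm

/-- For an `M`-matrix `A` with equal diagonal entries and doubly stochastic inverse, the
spectral radius of the Jacobi iteration matrix `J_A = D⁻¹(D - A)` equals `d = 1 - 1/a_11`,
and `ρ(J_A) = d ≥ r_i` for every `i`. -/
theorem jacobi_specRad_eq_and_ge_r {n : ℕ} (hn : 2 ≤ n)
    (A : Matrix (Fin n) (Fin n) ℝ)
    (hA : IsUnit A.det)
    (hoff : ∀ i j, i ≠ j → A i j ≤ 0)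
    (hinv : ∀ i j, 0 ≤ A⁻¹ i j)
    (hrow : ∀ i, ∑ j, A⁻¹ i j = 1)
    (hcol : ∀ j, ∑ i, A⁻¹ i j = 1)
    (hdiag : ∀ i j, A i i = A j j)
    (hne : ∀ i : Fin n, (univ.erase i).Nonempty) :
    ∀ i₀ : Fin n,
      specRad ((diagonal fun i => (A i i)⁻¹) * (diagonal (fun i => A i i) - A)) =
        1 - 1 / A i₀ i₀ ∧
      ∀ i : Fin n,
        (univ.erase i).sup' (hne i)
            (fun j => |A j i| / (|A j j| - ∑ k ∈ (univ.erase j).erase i, |A j k|)) ≤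
          1 - 1 / A i₀ i₀ := by
  intro i₀
  set a := A i₀ i₀ with ha
  have hda : ∀ i, A i i = a := fun i => hdiag i i₀
  -- row sums of A are 1
  have hArow : ∀ i, ∑ j, A i j = 1 := by
    have h1 : A⁻¹ *ᵥ (fun _ => (1:ℝ)) = fun _ => 1 := by
      funext i; simpa [Matrix.mulVec, dotProduct] using hrow i
    have h2 : A *ᵥ (fun _ => (1:ℝ)) = fun _ => 1 := by
      conv_lhs => rw [← h1]
      rw [Matrix.mulVec_mulVec, Matrix.mul_nonsing_inv _ hA, Matrix.one_mulVec]
    intro i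
    have := congrFun h2 i
    simpa [Matrix.mulVec, dotProduct] using this
  have ha1 : (1:ℝ) ≤ a := by
    have hs : ∑ j ∈ univ.erase i₀, A i₀ j ≤ 0 :=
      Finset.sum_nonpos fun j hj => hoff i₀ j (Ne.symm (Finset.mem_erase.mp hj).1)
    have h2 : A i₀ i₀ + ∑ j ∈ univ.erase i₀, A i₀ j = 1 := by
      rw [Finset.add_sum_erase univ (fun j => A i₀ j) (mem_univ i₀)]
      exact hArow i₀
    rw [← ha] at h2
    linarith
  have ha0 : (0:ℝ) < a := by linarith
  set J := (diagonal fun i => (A i i)⁻¹) * (diagonal (fun i => A i i) - A) with hJdef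
  have hJ : ∀ i j, J i j = (a)⁻¹ * ((if i = j then a else 0) - A i j) := by
    intro i j
    rw [hJdef, Matrix.diagonal_mul, Matrix.sub_apply, Matrix.diagonal_apply, hda i]
  have hJnn : ∀ i j, 0 ≤ J i j := by
    intro i j
    rw [hJ]
    by_cases h : i = j
    · simp [h, hda j]
    · rw [if_neg h]
      have h1 : 0 ≤ -A i j := by linarith [hoff i j h]
      have h2 : 0 ≤ a⁻¹ := inv_nonneg.mpr ha0.le
      nlinarith
  have hJrow : ∀ i, ∑ j, J i j = 1 - 1/a := by
    intro i
    simp only [hJ]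
    rw [← Finset.mul_sum, Finset.sum_sub_distrib]
    simp only [Finset.sum_ite_eq, mem_univ, if_true, hArow i]
    field_simp
  set B := J.map Complex.ofReal with hBdef
  have hBapp : ∀ (v : Fin n → ℂ) i, (B *ᵥ v) i = ∑ j, (J i j : ℂ) * v j := by
    intro v i
    simp [Matrix.mulVec, dotProduct, hBdef, Matrix.map_apply]
  -- d is an eigenvalue
  have hdspec : ((1 - 1/a : ℝ) : ℂ) ∈ spectrum ℂ B := by
    rw [mem_spectrum_iff_eigen]
    refine ⟨fun _ => 1, ?_, ?_⟩
    · intro h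
      have := congrFun h ⟨0, by omega⟩
      simp at this
    · funext i
      rw [hBapp]
      simp only [mul_one, Pi.smul_apply, smul_eq_mul, mul_one]
      rw [← Complex.ofReal_sum, hJrow i]
  have hd_mem : (1 - 1/a : ℝ) ∈ (fun z : ℂ => ‖z‖) '' spectrum ℂ B := by
    refine ⟨((1 - 1/a : ℝ) : ℂ), hdspec, ?_⟩
    show ‖((1 - 1/a : ℝ) : ℂ)‖ = 1 - 1/a
    rw [Complex.norm_real, Real.norm_eq_abs, abs_of_nonneg]
    have : 1/a ≤ 1 := by
      rw [div_le_one ha0]; linarith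
    linarith
  -- upper bound
  have hub : ∀ z ∈ (fun z : ℂ => ‖z‖) '' spectrum ℂ B, z ≤ 1 - 1/a := by
    rintro z ⟨μ, hμ, rfl⟩
    obtain ⟨v, hv, hEig⟩ := (mem_spectrum_iff_eigen B μ).mp hμ
    obtain ⟨i, -, himax⟩ := Finset.exists_max_image univ (fun j => ‖v j‖)
      ⟨⟨0, by omega⟩, mem_univ _⟩
    have hvi : 0 < ‖v i‖ := by
      obtain ⟨j, hj⟩ := Function.ne_iff.mp hv
      have h1 : 0 < ‖v j‖ := by
        simpa [norm_pos_iff] using hj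
      exact lt_of_lt_of_le h1 (himax j (mem_univ j))
    have h1 : ‖μ‖ * ‖v i‖ ≤ (1 - 1/a) * ‖v i‖ := by
      calc ‖μ‖ * ‖v i‖ = ‖(B *ᵥ v) i‖ := by
            rw [hEig]; simp [Pi.smul_apply, smul_eq_mul, _root_.map_mul]
        _ = ‖∑ j, (J i j : ℂ) * v j‖ := by rw [hBapp]
        _ ≤ ∑ j, ‖(J i j : ℂ) * v j‖ := norm_sum_le _ _
        _ = ∑ j, J i j * ‖v j‖ := by
            refine Finset.sum_congr rfl fun j _ => ?_
            rw [norm_mul, Complex.norm_real, Real.norm_eq_abs, abs_of_nonneg (hJnn i j)]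
        _ ≤ ∑ j, J i j * ‖v i‖ :=
            Finset.sum_le_sum fun j _ =>
              mul_le_mul_of_nonneg_left (himax j (mem_univ j)) (hJnn i j)
        _ = (1 - 1/a) * ‖v i‖ := by rw [← Finset.sum_mul, hJrow i]
    exact le_of_mul_le_mul_right h1 hvi
  constructor
  · show sSup ((fun z : ℂ => ‖z‖) '' spectrum ℂ (J.map Complex.ofReal)) = 1 - 1/a
    exact IsGreatest.csSup_eq ⟨hd_mem, hub⟩
  · intro i
    apply Finset.sup'_le
    intro j hj
    have hji : j ≠ i := (Finset.mem_erase.mp hj).1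
    have hAji : A j i ≤ 0 := hoff j i hji
    set t := |A j i| with htd
    have ht0 : 0 ≤ t := abs_nonneg _
    -- row sum of absolute off-diagonal entries in row j is a - 1
    have hsum : ∑ k ∈ univ.erase j, |A j k| = a - 1 := by
      have h1 : ∑ k ∈ univ.erase j, |A j k| = ∑ k ∈ univ.erase j, (-A j k) :=
        Finset.sum_congr rfl fun k hk =>
          abs_of_nonpos (hoff j k (Ne.symm (Finset.mem_erase.mp hk).1))
      have h3 : A j j + ∑ k ∈ univ.erase j, A j k = 1 := by
        rw [Finset.add_sum_erase univ (fun k => A j k) (mem_univ j)]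
        exact hArow j
      rw [hda j] at h3
      rw [h1, Finset.sum_neg_distrib]
      linarith
    have hit : i ∈ univ.erase j := Finset.mem_erase.mpr ⟨Ne.symm hji, mem_univ i⟩
    have hsum2 : ∑ k ∈ (univ.erase j).erase i, |A j k| = a - 1 - t := by
      have h2 : |A j i| + ∑ k ∈ (univ.erase j).erase i, |A j k| = a - 1 := by
        rw [Finset.add_sum_erase (univ.erase j) (fun k => |A j k|) hit]
        exact hsum
      linarith
    have hden : |A j j| - ∑ k ∈ (univ.erase j).erase i, |A j k| = 1 + t := by
      rw [hsum2, hda j, abs_of_pos ha0]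
      ring
    have htle : t ≤ a - 1 := by
      rw [← hsum]
      exact Finset.single_le_sum (fun k _ => abs_nonneg (A j k)) hit
    rw [hden]
    have h2 : (1 - 1/a : ℝ) = (a - 1)/a := by field_simp
    rw [h2, div_le_div_iff₀ (by linarith) ha0]
    nlinarith
end

section
/- If A is an M-matrix whose inverse is doubly stochastic, then for each i, r_i = max_{j≠i} |a_{ji}|/(1 + |a_{ji}|) = (max_{j≠i} |a_{ji}|)/(1 + max_{j≠i} |a_{ji}|) ≤ 1 - 1/a_{ii}. -/
open Finset

lemma gmono_aux {a b : ℝ} (ha : 0 ≤ a) (h : a ≤ b) : a / (1 + a) ≤ b / (1 + b) := by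
  have hb : 0 ≤ b := ha.trans h
  rw [div_le_div_iff₀ (by linarith) (by linarith)]
  nlinarith

/-- If `A` is an `M`-matrix whose inverse is doubly stochastic, then for each `i`,
`r_i = max_{j≠i} |a_ji|/(1+|a_ji|) = (max_{j≠i}|a_ji|)/(1 + max_{j≠i}|a_ji|) ≤ 1 - 1/a_ii`. -/
theorem r_i_eq_and_le {n : ℕ} (hn : 2 ≤ n)
    (A : Matrix (Fin n) (Fin n) ℝ)
    (hA : IsUnit A.det)
    (hoff : ∀ i j, i ≠ j → A i j ≤ 0)
    (hinv : ∀ i j, 0 ≤ A⁻¹ i j)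
    (hrow : ∀ i, ∑ j, A⁻¹ i j = 1)
    (hcol : ∀ j, ∑ i, A⁻¹ i j = 1)
    (hne : ∀ i : Fin n, (univ.erase i).Nonempty) :
    ∀ i : Fin n,
      (univ.erase i).sup' (hne i)
          (fun j => |A j i| / (|A j j| - ∑ k ∈ (univ.erase j).erase i, |A j k|)) =
        (univ.erase i).sup' (hne i) (fun j => |A j i| / (1 + |A j i|)) ∧
      (univ.erase i).sup' (hne i)
          (fun j => |A j i| / (|A j j| - ∑ k ∈ (univ.erase j).erase i, |A j k|)) =
        ((univ.erase i).sup' (hne i) fun j => |A j i|) /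
          (1 + (univ.erase i).sup' (hne i) fun j => |A j i|) ∧
      (univ.erase i).sup' (hne i)
          (fun j => |A j i| / (|A j j| - ∑ k ∈ (univ.erase j).erase i, |A j k|)) ≤
        1 - 1 / A i i := by
  -- Row sums of A are 1
  have hmul : A * A⁻¹ = 1 := Matrix.mul_nonsing_inv A hA
  have hmul' : A⁻¹ * A = 1 := Matrix.nonsing_inv_mul A hA
  have hrowA : ∀ j, ∑ k, A j k = 1 := by
    intro j
    calc ∑ k, A j k = ∑ k, A j k * ∑ m, A⁻¹ k m := by simp [hrow]
      _ = ∑ m, ∑ k, A j k * A⁻¹ k m := by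
            simp_rw [Finset.mul_sum]; exact Finset.sum_comm
      _ = ∑ m, (A * A⁻¹) j m := by simp [Matrix.mul_apply]
      _ = 1 := by rw [hmul]; simp [Matrix.one_apply]
  have hcolA : ∀ i, ∑ j, A j i = 1 := by
    intro i
    calc ∑ j, A j i = ∑ j, (∑ m, A⁻¹ m j) * A j i := by simp [hcol]
      _ = ∑ m, ∑ j, A⁻¹ m j * A j i := by
            simp_rw [Finset.sum_mul]; exact Finset.sum_comm
      _ = ∑ m, (A⁻¹ * A) m i := by simp [Matrix.mul_apply]
      _ = 1 := by rw [hmul']; simp [Matrix.one_apply]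
  -- diagonal identity: A j j = 1 + ∑_{k≠j} |A j k|
  have hdiag : ∀ j : Fin n, A j j = 1 + ∑ k ∈ univ.erase j, |A j k| := by
    intro j
    have hsplit : A j j + ∑ k ∈ univ.erase j, A j k = 1 := by
      rw [Finset.add_sum_erase _ _ (mem_univ j)]; exact hrowA j
    have habs : ∑ k ∈ univ.erase j, |A j k| = - ∑ k ∈ univ.erase j, A j k := by
      rw [← Finset.sum_neg_distrib]
      exact Finset.sum_congr rfl fun k hk =>
        abs_of_nonpos (hoff j k (Finset.ne_of_mem_erase hk).symm)
    linarith
  intro i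
  -- column identity at i
  have hcoli : A i i = 1 + ∑ j ∈ univ.erase i, |A j i| := by
    have hsplit : A i i + ∑ j ∈ univ.erase i, A j i = 1 := by
      rw [Finset.add_sum_erase univ (fun j => A j i) (mem_univ i)]; exact hcolA i
    have habs : ∑ j ∈ univ.erase i, |A j i| = - ∑ j ∈ univ.erase i, A j i := by
      rw [← Finset.sum_neg_distrib]
      exact Finset.sum_congr rfl fun j hj =>
        abs_of_nonpos (hoff j i (Finset.ne_of_mem_erase hj))
    linarith
  -- denominator simplification
  have hdenom : ∀ j ∈ univ.erase i,
      |A j j| - ∑ k ∈ (univ.erase j).erase i, |A j k| = 1 + |A j i| := by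
    intro j hj
    have hji : j ≠ i := Finset.ne_of_mem_erase hj
    have hij : i ∈ univ.erase j := Finset.mem_erase.2 ⟨hji.symm, mem_univ i⟩
    have hs : |A j i| + ∑ k ∈ (univ.erase j).erase i, |A j k| =
        ∑ k ∈ univ.erase j, |A j k| := Finset.add_sum_erase _ (fun k => |A j k|) hij
    have hpos : 0 < A j j := by
      have : 0 ≤ ∑ k ∈ univ.erase j, |A j k| :=
        Finset.sum_nonneg fun k _ => abs_nonneg _
      rw [hdiag j]; linarith
    rw [abs_of_pos hpos, hdiag j]
    linarith
  have heq1 : (univ.erase i).sup' (hne i)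
      (fun j => |A j i| / (|A j j| - ∑ k ∈ (univ.erase j).erase i, |A j k|)) =
      (univ.erase i).sup' (hne i) (fun j => |A j i| / (1 + |A j i|)) :=
    Finset.sup'_congr (hne i) rfl fun j hj => by rw [hdenom j hj]
  -- sup' commutes with t ↦ t/(1+t)
  obtain ⟨j0, hj0, hj0eq⟩ :=
    Finset.exists_mem_eq_sup' (hne i) (fun j => |A j i|)
  set M := (univ.erase i).sup' (hne i) fun j => |A j i| with hMdef
  have hM0 : 0 ≤ M := hj0eq ▸ abs_nonneg _
  have heq2 : (univ.erase i).sup' (hne i) (fun j => |A j i| / (1 + |A j i|)) =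
      M / (1 + M) := by
    apply le_antisymm
    · exact Finset.sup'_le _ _ fun j hj =>
        gmono_aux (abs_nonneg _) (Finset.le_sup' (fun j => |A j i|) hj)
    · calc M / (1 + M) = |A j0 i| / (1 + |A j0 i|) := by rw [← hj0eq]
        _ ≤ _ := Finset.le_sup' (fun j => |A j i| / (1 + |A j i|)) hj0
  refine ⟨heq1, by rw [heq1, heq2], ?_⟩
  -- the bound
  have hMle : M ≤ A i i - 1 := by
    rw [hj0eq, hcoli]
    have : |A j0 i| ≤ ∑ j ∈ univ.erase i, |A j i| :=
      Finset.single_le_sum (fun j _ => abs_nonneg (A j i)) hj0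
    linarith
  have hApos : 0 < A i i := by
    have : 0 ≤ ∑ j ∈ univ.erase i, |A j i| :=
      Finset.sum_nonneg fun j _ => abs_nonneg _
    rw [hcoli]; linarith
  rw [heq1, heq2]
  have := gmono_aux hM0 hMle
  have hrw : (A i i - 1) / (1 + (A i i - 1)) = 1 - 1 / A i i := by
    field_simp
    rw [show (1 : ℝ) + (A i i - 1) = A i i by ring, mul_div_cancel_left₀ _ hApos.ne']
  calc M / (1 + M) ≤ (A i i - 1) / (1 + (A i i - 1)) := this
    _ = 1 - 1 / A i i := hrw
end

section
/- Let (p_{ki}) be nonnegative reals with p_{ki} < 1 for k ≠ i, and suppose positive reals φ_i, ℓ_i satisfy ℓ_i ≤ α_{ii} ≤ φ_i, where α_{ij} are the entries of A^{-1} for a strictly diagonally dominant M-matrix A with α_{ki} ≤ p_{ki} α_{ii}. Then τ(A) ≥ 2 / max_{i≠j}{ φ_i + φ_j + [ (max{φ_i,φ_j} - min{ℓ_i,ℓ_j})² + 4 φ_i φ_j (Σ_{k≠i} p_{ki})(Σ_{k≠j} p_{kj}) ]^{1/2} }. -/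
open Finset
open Matrix

lemma spec_nonempty_aux {n : ℕ} (hn : 1 ≤ n) (M : Matrix (Fin n) (Fin n) ℂ) :
    (spectrum ℂ M).Nonempty := by
  have : Nonempty (Fin n) := ⟨⟨0, hn⟩⟩
  obtain ⟨c, hc⟩ := Module.End.exists_eigenvalue (Matrix.toLinAlgEquiv' M)
  exact ⟨c, (AlgEquiv.spectrum_eq (Matrix.toLinAlgEquiv') M) ▸
    Module.End.hasEigenvalue_iff_mem_spectrum.mp hc⟩


lemma det_scalar_sub_eq_zero' {n : ℕ} {M : Matrix (Fin n) (Fin n) ℂ} {μ : ℂ}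
    (h : μ ∈ spectrum ℂ M) :
    (algebraMap ℂ (Matrix (Fin n) (Fin n) ℂ) μ - M).det = 0 := by
  have := spectrum.mem_iff.mp h
  by_contra hdet
  exact this ((Matrix.isUnit_iff_isUnit_det _).mpr (isUnit_iff_ne_zero.mpr hdet))

/-- Brauer's ovals of Cassini theorem (column version) for a nonnegative real matrix. -/
lemma brauer_col {n : ℕ} (hn : 2 ≤ n) (B : Matrix (Fin n) (Fin n) ℝ)
    (hB : ∀ i j, 0 ≤ B i j) {μ : ℂ} (hμ : μ ∈ spectrum ℂ (B.map Complex.ofReal)) :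
    ∃ i j : Fin n, i ≠ j ∧
      ‖μ - (B i i : ℂ)‖ * ‖μ - (B j j : ℂ)‖ ≤
        (∑ k ∈ univ.erase i, B k i) * (∑ k ∈ univ.erase j, B k j) := by
  classical
  set Bc := B.map (Complex.ofReal) with hBc
  have hdet : (algebraMap ℂ (Matrix (Fin n) (Fin n) ℂ) μ - Bc).det = 0 :=
    det_scalar_sub_eq_zero' hμ
  have hdetT : (algebraMap ℂ (Matrix (Fin n) (Fin n) ℂ) μ - Bc.transpose).det = 0 := by
    rw [show algebraMap ℂ (Matrix (Fin n) (Fin n) ℂ) μ - Bc.transpose =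
        (algebraMap ℂ (Matrix (Fin n) (Fin n) ℂ) μ - Bc).transpose by
      rw [Matrix.transpose_sub]
      congr 1
      rw [Algebra.algebraMap_eq_smul_one, Matrix.transpose_smul, Matrix.transpose_one]]
    rw [Matrix.det_transpose]; exact hdet
  obtain ⟨v, hv0, hvec⟩ := (Matrix.exists_mulVec_eq_zero_iff).mpr hdetT
  -- eigen-equation: ∀ k, μ * v k = ∑ l, B l k * v l
  have heq : ∀ k, μ * v k = ∑ l, (B l k : ℂ) * v l := by
    intro k
    have h1 := congrFun hvec k
    rw [Matrix.sub_mulVec, Algebra.algebraMap_eq_smul_one, Matrix.smul_mulVec,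
      Matrix.one_mulVec] at h1
    have h2 : μ * v k - Bc.transpose.mulVec v k = 0 := h1
    have h3 : Bc.transpose.mulVec v k = ∑ l, (B l k : ℂ) * v l := by
      simp [Matrix.mulVec, dotProduct, Matrix.transpose_apply, Bc, Matrix.map_apply]
    rw [h3] at h2
    linear_combination h2
  -- pick i maximizing |v i|, j maximizing over the rest
  obtain ⟨i, -, hi⟩ := Finset.exists_max_image (univ : Finset (Fin n))
    (fun k => ‖v k‖) ⟨⟨0, by omega⟩, mem_univ _⟩
  have herase : (univ.erase i).Nonempty := by
    rw [← Finset.card_pos, Finset.card_erase_of_mem (mem_univ _), Finset.card_univ,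
      Fintype.card_fin]
    omega
  obtain ⟨j, hjmem, hj⟩ := Finset.exists_max_image (univ.erase i)
    (fun k => ‖v k‖) herase
  have hji : j ≠ i := (Finset.mem_erase.mp hjmem).1
  have hvi : 0 < ‖v i‖ := by
    obtain ⟨k, hk⟩ := Function.ne_iff.mp hv0
    exact lt_of_lt_of_le (by simpa using hk) (hi k (mem_univ _))
  -- row equations with diagonal split off
  have hrow : ∀ k : Fin n, (μ - (B k k : ℂ)) * v k = ∑ l ∈ univ.erase k, (B l k : ℂ) * v l := by
    intro k
    have := heq k
    rw [← Finset.add_sum_erase _ _ (mem_univ k)] at this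
    ring_nf
    ring_nf at this
    linear_combination this
  -- absolute value bounds
  have habs : ∀ (k : Fin n) (c : ℝ), (∀ l ∈ univ.erase k, ‖v l‖ ≤ c) → 0 ≤ c →
      ‖μ - (B k k : ℂ)‖ * ‖v k‖ ≤ (∑ l ∈ univ.erase k, B l k) * c := by
    intro k c hc hc0
    rw [← norm_mul, hrow k]
    calc ‖∑ l ∈ univ.erase k, (B l k : ℂ) * v l‖
        ≤ ∑ l ∈ univ.erase k, ‖(B l k : ℂ) * v l‖ :=
          norm_sum_le _ _
      _ ≤ ∑ l ∈ univ.erase k, B l k * c := by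
          refine Finset.sum_le_sum fun l hl => ?_
          rw [norm_mul, Complex.norm_real, Real.norm_eq_abs, abs_of_nonneg (hB l k)]
          exact mul_le_mul_of_nonneg_left (hc l hl) (hB l k)
      _ = (∑ l ∈ univ.erase k, B l k) * c := by rw [Finset.sum_mul]
  have hCi : 0 ≤ ∑ l ∈ univ.erase i, B l i := Finset.sum_nonneg fun l _ => hB l i
  have hCj : 0 ≤ ∑ l ∈ univ.erase j, B l j := Finset.sum_nonneg fun l _ => hB l j
  have hXi : ‖μ - (B i i : ℂ)‖ * ‖v i‖ ≤
      (∑ l ∈ univ.erase i, B l i) * ‖v j‖ :=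
    habs i _ (fun l hl => hj l (Finset.mem_erase.mpr ⟨(Finset.mem_erase.mp hl).1, mem_univ _⟩))
      (norm_nonneg _)
  have hXj : ‖μ - (B j j : ℂ)‖ * ‖v j‖ ≤
      (∑ l ∈ univ.erase j, B l j) * ‖v i‖ :=
    habs j _ (fun l _ => hi l (mem_univ _)) (norm_nonneg _)
  refine ⟨i, j, hji.symm, ?_⟩
  rcases eq_or_lt_of_le (norm_nonneg (v j)) with hvj | hvj
  · -- |v j| = 0 forces |μ - B i i| = 0
    have : ‖μ - (B i i : ℂ)‖ * ‖v i‖ ≤ 0 := by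
      rw [← hvj] at hXi; simpa using hXi
    have hz : ‖μ - (B i i : ℂ)‖ = 0 := by
      nlinarith [norm_nonneg (μ - (B i i : ℂ))]
    rw [hz, zero_mul]
    exact mul_nonneg hCi hCj
  · have := mul_le_mul hXi hXj (mul_nonneg (norm_nonneg _) (norm_nonneg _))
      (mul_nonneg hCi (norm_nonneg _))
    nlinarith [norm_nonneg (μ - (B i i : ℂ)), norm_nonneg (μ - (B j j : ℂ))]


set_option maxHeartbeats 1000000

/-- Lower bound for `τ(A) = 1/ρ(A⁻¹)` of a strictly diagonally dominant `M`-matrix using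
lower and upper bounds `ℓ_i ≤ α_ii ≤ φ_i` on the diagonal entries of `A⁻¹`. -/
theorem tau_lower_bound_entrywise {n : ℕ} (hn : 2 ≤ n)
    (A : Matrix (Fin n) (Fin n) ℝ)
    (hA : IsUnit A.det)
    (hoff : ∀ i j, i ≠ j → A i j ≤ 0)
    (hinv : ∀ i j, 0 ≤ A⁻¹ i j)
    (hsdd : ∀ i, ∑ j ∈ univ.erase i, |A i j| < A i i)
    (p : Fin n → Fin n → ℝ)
    (hp0 : ∀ k i, k ≠ i → 0 ≤ p k i) (hp1 : ∀ k i, k ≠ i → p k i < 1)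
    (hpa : ∀ k i, k ≠ i → A⁻¹ k i ≤ p k i * A⁻¹ i i)
    (φ ℓ : Fin n → ℝ) (hφ : ∀ i, 0 < φ i) (hℓ : ∀ i, 0 < ℓ i)
    (hlow : ∀ i, ℓ i ≤ A⁻¹ i i) (hup : ∀ i, A⁻¹ i i ≤ φ i)
    (hne : (univ.offDiag : Finset (Fin n × Fin n)).Nonempty) :
    2 / (univ.offDiag.sup' hne (fun q =>
        φ q.1 + φ q.2 + Real.sqrt ((max (φ q.1) (φ q.2) - min (ℓ q.1) (ℓ q.2)) ^ 2 +
          4 * φ q.1 * φ q.2 * (∑ k ∈ univ.erase q.1, p k q.1) *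
            (∑ k ∈ univ.erase q.2, p k q.2)))) ≤
      1 / specRad A⁻¹ := by
  classical
  set B := A⁻¹ with hBdef
  set f : Fin n × Fin n → ℝ := fun q =>
      φ q.1 + φ q.2 + Real.sqrt ((max (φ q.1) (φ q.2) - min (ℓ q.1) (ℓ q.2)) ^ 2 +
        4 * φ q.1 * φ q.2 * (∑ k ∈ univ.erase q.1, p k q.1) *
          (∑ k ∈ univ.erase q.2, p k q.2)) with hf
  set D := univ.offDiag.sup' hne f with hD
  -- D is positive
  have hDpos : 0 < D := by
    obtain ⟨q0, hq0⟩ := hne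
    have h1 : f q0 ≤ D := Finset.le_sup' f hq0
    have h2 : 0 < f q0 := by
      have := Real.sqrt_nonneg ((max (φ q0.1) (φ q0.2) - min (ℓ q0.1) (ℓ q0.2)) ^ 2 +
        4 * φ q0.1 * φ q0.2 * (∑ k ∈ univ.erase q0.1, p k q0.1) *
          (∑ k ∈ univ.erase q0.2, p k q0.2))
      have := hφ q0.1; have := hφ q0.2
      simp only [hf]; linarith
    linarith
  -- every spectral value has modulus ≤ D / 2
  have hkey : ∀ μ ∈ spectrum ℂ (B.map Complex.ofReal), ‖μ‖ ≤ D / 2 := by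
    intro μ hμ
    obtain ⟨i, j, hij, hbr⟩ := brauer_col hn B hinv hμ
    set Pi' := ∑ k ∈ univ.erase i, p k i with hPi'
    set Pj' := ∑ k ∈ univ.erase j, p k j with hPj'
    have hPi0 : 0 ≤ Pi' := Finset.sum_nonneg fun k hk => hp0 k i (Finset.mem_erase.mp hk).1
    have hPj0 : 0 ≤ Pj' := Finset.sum_nonneg fun k hk => hp0 k j (Finset.mem_erase.mp hk).1
    have hCi : ∑ k ∈ univ.erase i, B k i ≤ φ i * Pi' := by
      calc ∑ k ∈ univ.erase i, B k i ≤ ∑ k ∈ univ.erase i, p k i * φ i := by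
            refine Finset.sum_le_sum fun k hk => ?_
            have hki := (Finset.mem_erase.mp hk).1
            calc B k i ≤ p k i * B i i := hpa k i hki
              _ ≤ p k i * φ i := mul_le_mul_of_nonneg_left (hup i) (hp0 k i hki)
        _ = φ i * Pi' := by rw [← Finset.sum_mul, mul_comm]
    have hCj : ∑ k ∈ univ.erase j, B k j ≤ φ j * Pj' := by
      calc ∑ k ∈ univ.erase j, B k j ≤ ∑ k ∈ univ.erase j, p k j * φ j := by
            refine Finset.sum_le_sum fun k hk => ?_
            have hkj := (Finset.mem_erase.mp hk).1
            calc B k j ≤ p k j * B j j := hpa k j hkj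
              _ ≤ p k j * φ j := mul_le_mul_of_nonneg_left (hup j) (hp0 k j hkj)
        _ = φ j * Pj' := by rw [← Finset.sum_mul, mul_comm]
    have hCj0 : 0 ≤ ∑ k ∈ univ.erase j, B k j := Finset.sum_nonneg fun k _ => hinv k j
    have hkey2 : ‖μ - (B i i : ℂ)‖ * ‖μ - (B j j : ℂ)‖ ≤
        (φ i * Pi') * (φ j * Pj') := by
      refine le_trans hbr (mul_le_mul hCi hCj hCj0 ?_)
      exact mul_nonneg (le_of_lt (hφ i)) hPi0
    set x := ‖μ‖ with hx
    set a := B i i with ha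
    set b := B j j with hb
    have ha0 : 0 ≤ a := hinv i i
    have hb0 : 0 ≤ b := hinv j j
    have hax : x - a ≤ ‖μ - (a : ℂ)‖ := by
      have h1 : x ≤ ‖μ - (a : ℂ)‖ + a := by
        calc x = ‖(μ - (a : ℂ)) + (a : ℂ)‖ := by ring_nf; exact hx
          _ ≤ ‖μ - (a : ℂ)‖ + ‖(a : ℂ)‖ := norm_add_le _ _
          _ = ‖μ - (a : ℂ)‖ + a := by
              rw [Complex.norm_real, Real.norm_eq_abs, abs_of_nonneg ha0]
      linarith
    have hbx : x - b ≤ ‖μ - (b : ℂ)‖ := by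
      have h1 : x ≤ ‖μ - (b : ℂ)‖ + b := by
        calc x = ‖(μ - (b : ℂ)) + (b : ℂ)‖ := by ring_nf; exact hx
          _ ≤ ‖μ - (b : ℂ)‖ + ‖(b : ℂ)‖ := norm_add_le _ _
          _ = ‖μ - (b : ℂ)‖ + b := by
              rw [Complex.norm_real, Real.norm_eq_abs, abs_of_nonneg hb0]
      linarith
    set mx := max (φ i) (φ j) with hmx
    set mn := min (ℓ i) (ℓ j) with hmn
    set Δ := (mx - mn) ^ 2 + 4 * φ i * φ j * Pi' * Pj' with hΔ
    have hQ0 : 0 ≤ 4 * φ i * φ j * Pi' * Pj' := by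
      have := (hφ i).le; have := (hφ j).le
      have h4 : (0:ℝ) ≤ 4 * φ i * φ j := by positivity
      exact mul_nonneg (mul_nonneg h4 hPi0) hPj0
    have hΔ0 : 0 ≤ Δ := by positivity
    set s := Real.sqrt Δ with hs
    have hs2 : s ^ 2 = Δ := Real.sq_sqrt hΔ0
    have hs_ge : mx - mn ≤ s := by
      calc mx - mn ≤ |mx - mn| := le_abs_self _
        _ = Real.sqrt ((mx - mn) ^ 2) := (Real.sqrt_sq_eq_abs _).symm
        _ ≤ s := Real.sqrt_le_sqrt (by linarith)
    -- bounds relating φ, ℓ to mx, mn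
    have h1 : φ i - φ j ≤ mx - mn := by
      have : mn ≤ ℓ j := min_le_right _ _
      have : ℓ j ≤ φ j := le_trans (hlow j) (hup j)
      have : φ i ≤ mx := le_max_left _ _
      linarith [min_le_right (ℓ i) (ℓ j), le_trans (hlow j) (hup j), le_max_left (φ i) (φ j)]
    have h2 : φ j - φ i ≤ mx - mn := by
      linarith [min_le_left (ℓ i) (ℓ j), le_trans (hlow i) (hup i), le_max_right (φ i) (φ j)]
    have hsq : (φ i - φ j) ^ 2 ≤ (mx - mn) ^ 2 := sq_le_sq' (by linarith) (by linarith)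
    have hfij : f (i, j) ≤ D := Finset.le_sup' f (Finset.mem_offDiag.mpr ⟨mem_univ _, mem_univ _, hij⟩)
    have hfij' : φ i + φ j + s ≤ D := by
      simpa only [hf, hs, hΔ, hmx, hmn, hPi', hPj'] using hfij
    -- suffices x ≤ (φ i + φ j + s) / 2
    have hmain : x ≤ (φ i + φ j + s) / 2 := by
      by_contra hxc
      push_neg at hxc
      have hMa : 0 ≤ (φ j - φ i + s) / 2 := by linarith
      have hMb : 0 ≤ (φ i - φ j + s) / 2 := by linarith
      have hxa : (φ j - φ i + s) / 2 < x - a := by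
        have := hup i; linarith
      have hxb : (φ i - φ j + s) / 2 < x - b := by
        have := hup j; linarith
      have hprod : (x - a) * (x - b) ≤ (φ i * Pi') * (φ j * Pj') := by
        calc (x - a) * (x - b)
            ≤ ‖μ - (a : ℂ)‖ * ‖μ - (b : ℂ)‖ :=
              mul_le_mul hax hbx (by linarith) (norm_nonneg _)
          _ ≤ (φ i * Pi') * (φ j * Pj') := hkey2
      have hlt : ((φ j - φ i + s) / 2) * ((φ i - φ j + s) / 2) < (x - a) * (x - b) :=
        mul_lt_mul'' hxa hxb hMa hMb
      nlinarith [hs2, hsq, hprod, hlt]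
    linarith
  -- spectrum is nonempty and contains a nonzero value
  obtain ⟨μ₀, hμ₀⟩ := spec_nonempty_aux (by omega) (B.map Complex.ofReal)
  have hBc_unit : IsUnit (B.map Complex.ofReal) := by
    have hBd : IsUnit B.det := A.isUnit_nonsing_inv_det hA
    have hdet : (B.map Complex.ofReal).det = (B.det : ℂ) :=
      (RingHom.map_det Complex.ofRealHom B).symm
    refine (Matrix.isUnit_iff_isUnit_det _).mpr ?_
    rw [hdet]
    exact isUnit_iff_ne_zero.mpr (by exact_mod_cast hBd.ne_zero)
  have hμ0ne : μ₀ ≠ 0 := by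
    rintro rfl
    have := spectrum.mem_iff.mp hμ₀
    rw [map_zero, zero_sub] at this
    exact this hBc_unit.neg
  have habs0 : 0 < ‖μ₀‖ := norm_pos_iff.mpr hμ0ne
  have hbdd : BddAbove ((fun z : ℂ => ‖z‖) '' spectrum ℂ (B.map Complex.ofReal)) :=
    ⟨D / 2, fun y hy => by obtain ⟨μ, hμ, rfl⟩ := hy; exact hkey μ hμ⟩
  have hρ_pos : 0 < specRad B := by
    have : ‖μ₀‖ ≤ specRad B :=
      le_csSup hbdd (Set.mem_image_of_mem _ hμ₀)
    linarith
  have hρ_le : specRad B ≤ D / 2 := by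
    refine Real.sSup_le ?_ (by linarith)
    rintro y ⟨μ, hμ, rfl⟩
    exact hkey μ hμ
  rw [div_le_div_iff₀ hDpos hρ_pos]
  linarith
end

section
/- Let A be a strictly diagonally dominant M-matrix with inverse [α_{ij}], and suppose 0 ≤ p_{ki} < 1 satisfy α_{ki} ≤ p_{ki} α_{ii} and α_{ii} ≤ φ_i := 1/(a_{ii} - Σ_{j≠i} |a_{ij}| p_{ji}). Then τ(A) ≥ 1 / max_i { (1 + Σ_{k≠i} p_{ki}) φ_i }. -/
open Finset Matrix

lemma spectrum_transpose {n : ℕ} (M : Matrix (Fin n) (Fin n) ℂ) :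
    spectrum ℂ Mᵀ = spectrum ℂ M := by
  ext z
  simp only [spectrum.mem_iff, not_iff_not, Matrix.isUnit_iff_isUnit_det]
  have : (algebraMap ℂ (Matrix (Fin n) (Fin n) ℂ) z - Mᵀ).det
      = (algebraMap ℂ (Matrix (Fin n) (Fin n) ℂ) z - M).det := by
    rw [← Matrix.det_transpose (algebraMap ℂ _ z - M), Matrix.transpose_sub]
    congr 1
    simp [Matrix.algebraMap_eq_diagonal]
  rw [this]

lemma abs_le_of_mem_spectrum {n : ℕ} (hn : 1 ≤ n) (M : Matrix (Fin n) (Fin n) ℂ)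
    {z : ℂ} (hz : z ∈ spectrum ℂ M) (C : ℝ)
    (hC : ∀ i, ∑ k, ‖M k i‖ ≤ C) : ‖z‖ ≤ C := by
  haveI : Nonempty (Fin n) := ⟨⟨0, hn⟩⟩
  letI : SeminormedRing (Matrix (Fin n) (Fin n) ℂ) := Matrix.linftyOpSemiNormedRing
  letI : NormedRing (Matrix (Fin n) (Fin n) ℂ) := Matrix.linftyOpNormedRing
  letI : NormedAlgebra ℂ (Matrix (Fin n) (Fin n) ℂ) := Matrix.linftyOpNormedAlgebra
  letI : CompleteSpace (Matrix (Fin n) (Fin n) ℂ) :=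
    FiniteDimensional.complete ℂ (Matrix (Fin n) (Fin n) ℂ)
  rw [← spectrum_transpose] at hz
  have h1 := spectrum.norm_le_norm_of_mem hz
  have h2 : ‖Mᵀ‖ ≤ C := by
    rw [Matrix.linfty_opNorm_def]
    have hC0 : (0 : ℝ) ≤ C := le_trans (by positivity) (hC (Classical.arbitrary _))
    rw [← Real.coe_toNNReal C hC0]
    norm_cast
    refine Finset.sup_le fun i _ => ?_
    rw [← NNReal.coe_le_coe, Real.coe_toNNReal C hC0]
    push_cast
    simpa [Matrix.transpose_apply] using hC i
  calc ‖z‖ = ‖z‖ := rfl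
    _ ≤ C := h1.trans h2

/-- Lower bound for `τ(A) = 1/ρ(A⁻¹)` of a strictly diagonally dominant `M`-matrix:
`τ(A) ≥ 1 / max_i { (1 + ∑_{k≠i} p_ki) φ_i }`, where
`φ_i = 1/(a_ii - ∑_{j≠i} |a_ij| p_ji)`. -/
theorem tau_lower_bound_phi {n : ℕ} (hn : 1 ≤ n)
    (A : Matrix (Fin n) (Fin n) ℝ)
    (hA : IsUnit A.det)
    (hoff : ∀ i j, i ≠ j → A i j ≤ 0)
    (hinv : ∀ i j, 0 ≤ A⁻¹ i j)
    (hsdd : ∀ i, ∑ j ∈ univ.erase i, |A i j| < A i i)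
    (p : Fin n → Fin n → ℝ)
    (hp0 : ∀ k i, k ≠ i → 0 ≤ p k i) (hp1 : ∀ k i, k ≠ i → p k i < 1)
    (hpa : ∀ k i, k ≠ i → A⁻¹ k i ≤ p k i * A⁻¹ i i)
    (hup : ∀ i, A⁻¹ i i ≤ 1 / (A i i - ∑ j ∈ univ.erase i, |A i j| * p j i))
    (hne : (univ : Finset (Fin n)).Nonempty) :
    1 / (univ.sup' hne (fun i => (1 + ∑ k ∈ univ.erase i, p k i) *
        (1 / (A i i - ∑ j ∈ univ.erase i, |A i j| * p j i)))) ≤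
      1 / specRad A⁻¹ := by
  haveI : Nonempty (Fin n) := ⟨⟨0, hn⟩⟩
  set C := univ.sup' hne (fun i => (1 + ∑ k ∈ univ.erase i, p k i) *
      (1 / (A i i - ∑ j ∈ univ.erase i, |A i j| * p j i))) with hCdef
  -- denominators are positive
  have hden : ∀ i, 0 < A i i - ∑ j ∈ univ.erase i, |A i j| * p j i := by
    intro i
    have h1 : ∑ j ∈ univ.erase i, |A i j| * p j i ≤ ∑ j ∈ univ.erase i, |A i j| := by
      refine Finset.sum_le_sum fun j hj => ?_
      have hji : j ≠ i := (Finset.mem_erase.mp hj).1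
      nlinarith [abs_nonneg (A i j), hp1 j i hji, hp0 j i hji]
    linarith [hsdd i]
  -- column sums bounded by C
  have hcol : ∀ i, ∑ k, A⁻¹ k i ≤ C := by
    intro i
    have hsplit : ∑ k, A⁻¹ k i = A⁻¹ i i + ∑ k ∈ univ.erase i, A⁻¹ k i :=
      (Finset.add_sum_erase univ (fun k => A⁻¹ k i) (mem_univ i)).symm
    have h2 : ∑ k ∈ univ.erase i, A⁻¹ k i ≤ (∑ k ∈ univ.erase i, p k i) * A⁻¹ i i := by
      rw [Finset.sum_mul]
      exact Finset.sum_le_sum fun k hk => hpa k i (Finset.mem_erase.mp hk).1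
    have hsum0 : 0 ≤ ∑ k ∈ univ.erase i, p k i :=
      Finset.sum_nonneg fun k hk => hp0 k i (Finset.mem_erase.mp hk).1
    have h3 : ∑ k, A⁻¹ k i ≤ (1 + ∑ k ∈ univ.erase i, p k i) * A⁻¹ i i := by
      rw [hsplit]; nlinarith
    have h4 : (1 + ∑ k ∈ univ.erase i, p k i) * A⁻¹ i i ≤
        (1 + ∑ k ∈ univ.erase i, p k i) *
        (1 / (A i i - ∑ j ∈ univ.erase i, |A i j| * p j i)) := by
      apply mul_le_mul_of_nonneg_left (hup i) (by linarith)
    have h5 := Finset.le_sup' (fun i => (1 + ∑ k ∈ univ.erase i, p k i) *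
        (1 / (A i i - ∑ j ∈ univ.erase i, |A i j| * p j i))) (mem_univ i)
    rw [← hCdef] at h5
    exact h3.trans (h4.trans h5)
  -- C is positive
  have hCpos : 0 < C := by
    obtain ⟨i⟩ := (inferInstance : Nonempty (Fin n))
    have : (0:ℝ) < (1 + ∑ k ∈ univ.erase i, p k i) *
        (1 / (A i i - ∑ j ∈ univ.erase i, |A i j| * p j i)) := by
      have hsum0 : 0 ≤ ∑ k ∈ univ.erase i, p k i :=
        Finset.sum_nonneg fun k hk => hp0 k i (Finset.mem_erase.mp hk).1
      have := hden i
      positivity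
    have h5 := Finset.le_sup' (fun i => (1 + ∑ k ∈ univ.erase i, p k i) *
        (1 / (A i i - ∑ j ∈ univ.erase i, |A i j| * p j i))) (mem_univ i)
    rw [← hCdef] at h5
    exact lt_of_lt_of_le this h5
  set M := (A⁻¹).map (Complex.ofReal) with hM
  -- each spectral value bounded
  have hcolC : ∀ i, ∑ k, ‖M k i‖ ≤ C := by
    intro i
    have : ∀ k, ‖M k i‖ = A⁻¹ k i := by
      intro k
      simp [hM, Matrix.map_apply, Complex.norm_real, abs_of_nonneg (hinv k i)]
    simpa [this] using hcol i
  have hbd : ∀ x ∈ (fun z : ℂ => ‖z‖) '' spectrum ℂ M, x ≤ C := by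
    rintro x ⟨z, hz, rfl⟩
    exact abs_le_of_mem_spectrum hn M hz C hcolC
  -- spectral radius ≤ C
  have hρle : specRad A⁻¹ ≤ C := Real.sSup_le hbd hCpos.le
  -- spectral radius > 0
  have hρpos : 0 < specRad A⁻¹ := by
    letI : SeminormedRing (Matrix (Fin n) (Fin n) ℂ) := Matrix.linftyOpSemiNormedRing
    letI : NormedRing (Matrix (Fin n) (Fin n) ℂ) := Matrix.linftyOpNormedRing
    letI : NormedAlgebra ℂ (Matrix (Fin n) (Fin n) ℂ) := Matrix.linftyOpNormedAlgebra
    letI : CompleteSpace (Matrix (Fin n) (Fin n) ℂ) :=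
      FiniteDimensional.complete ℂ (Matrix (Fin n) (Fin n) ℂ)
    obtain ⟨z, hz⟩ := spectrum.nonempty M
    have hMunit : IsUnit M := by
      rw [Matrix.isUnit_iff_isUnit_det, hM]
      have hdet : (A⁻¹.map Complex.ofReal).det
          = (Complex.ofRealHom : ℝ →+* ℂ) A⁻¹.det :=
        ((Complex.ofRealHom : ℝ →+* ℂ).map_det A⁻¹).symm
      rw [hdet]
      exact (Matrix.isUnit_nonsing_inv_det_iff.mpr hA).map
        (Complex.ofRealHom : ℝ →+* ℂ)
    have hz0 : z ≠ 0 := by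
      rintro rfl
      exact (spectrum.zero_mem_iff ℂ).mp hz hMunit
    have habs : 0 < ‖z‖ := norm_pos_iff.mpr hz0
    have hle : ‖z‖ ≤ specRad A⁻¹ := by
      have heq : specRad A⁻¹ = sSup ((fun z : ℂ => ‖z‖) '' spectrum ℂ M) := rfl
      rw [heq]
      exact le_csSup ⟨C, fun x hx => hbd x hx⟩ ⟨z, hz, rfl⟩
    linarith
  exact one_div_le_one_div_of_le hρpos hρle
end
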